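/- arXiv:1105.5004 — 8 statements merged into one kernel-verified Lean document; each statement's English description precedes it below -/
import Mathlib

section
/- Ghosh–Louis theorem (inequality part): Let (Ω,F,P) be a probability space, let G ⊆ F be a sub-σ-algebra (representing conditioning on the data y), and let θ₁,…,θₙ with n ≥ 2 be square-integrable real random variables. Writing θ̄ = (1/n)Σᵢθᵢ and mᵢ = E[θᵢ | G], one has almost surely E[(1/n)Σᵢ(θᵢ − θ̄)² | G] ≥ (1/n)Σᵢ(mᵢ − (1/n)Σⱼmⱼ)²; that is, the empirical variance of the vector of conditional means is bounded above by the conditional expectation of the empirical variance of the parameter ensemble. -/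
open MeasureTheory

private lemma sq_le_of_forall_rat {y z : ℝ} (h : ∀ q : ℚ, 2 * q * y - (q : ℝ) ^ 2 ≤ z) :
    y ^ 2 ≤ z := by
  by_contra hlt
  push_neg at hlt
  have hpos : 0 < y ^ 2 - z := by linarith
  obtain ⟨q, hq⟩ := exists_rat_near y (Real.sqrt_pos.mpr hpos)
  have h1 : (y - q) ^ 2 < y ^ 2 - z := by
    calc (y - q) ^ 2 = |y - (q : ℝ)| * |y - (q : ℝ)| := by
          rw [abs_mul_abs_self]; ring
      _ < Real.sqrt (y ^ 2 - z) * Real.sqrt (y ^ 2 - z) :=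
          mul_self_lt_mul_self (abs_nonneg _) hq
      _ = y ^ 2 - z := Real.mul_self_sqrt hpos.le
  have h2 := h q
  nlinarith

private lemma condExp_sq_ge {Ω : Type*} {mΩ : MeasurableSpace Ω} {μ : Measure Ω}
    [IsProbabilityMeasure μ] {G : MeasurableSpace Ω} (hG : G ≤ mΩ)
    {X : Ω → ℝ} (hX : MeasureTheory.MemLp X 2 μ) :
    ∀ᵐ ω ∂μ, ((μ[X|G]) ω) ^ 2 ≤ (μ[fun ω' => (X ω') ^ 2|G]) ω := by
  have hXint : Integrable X μ := hX.integrable one_le_two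
  have hX2 : Integrable (fun ω => (X ω) ^ 2) μ := hX.integrable_sq
  have key : ∀ q : ℚ, ∀ᵐ ω ∂μ,
      2 * q * ((μ[X|G]) ω) - (q : ℝ) ^ 2 ≤ (μ[fun ω' => (X ω') ^ 2|G]) ω := by
    intro q
    have hle : (fun ω => (2 * (q : ℝ)) • X ω - (q : ℝ) ^ 2) ≤ᵐ[μ]
        fun ω => (X ω) ^ 2 :=
      Filter.Eventually.of_forall fun ω => by
        simp only [smul_eq_mul]; nlinarith [sq_nonneg (X ω - q)]
    have h1 := condExp_mono (m := G)
      (((hXint.const_mul (2 * (q : ℝ)))).sub (integrable_const ((q : ℝ) ^ 2))) hX2 hle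
    have h2 : μ[fun ω => (2 * (q : ℝ)) • X ω - (q : ℝ) ^ 2|G] =ᵐ[μ]
        fun ω => 2 * q * ((μ[X|G]) ω) - (q : ℝ) ^ 2 := by
      have hs : μ[(fun ω => (2 * (q : ℝ)) • X ω) - (fun _ => (q : ℝ) ^ 2)|G] =ᵐ[μ]
          μ[fun ω => (2 * (q : ℝ)) • X ω|G] - μ[fun _ : Ω => (q : ℝ) ^ 2|G] :=
        condExp_sub (m := G) (hXint.const_mul (2 * (q : ℝ))) (integrable_const _)
      have hsm : μ[(2 * (q : ℝ)) • X|G] =ᵐ[μ] (2 * (q : ℝ)) • μ[X|G] :=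
        condExp_smul (m := G) (2 * (q : ℝ)) X
      have hc : μ[fun _ : Ω => (q : ℝ) ^ 2|G] = fun _ => (q : ℝ) ^ 2 :=
        condExp_const hG _
      refine hs.trans ?_
      filter_upwards [hsm] with ω hω
      simp only [Pi.sub_apply, hc]
      have : (μ[(2 * (q : ℝ)) • X|G]) ω = (2 * (q : ℝ)) * (μ[X|G]) ω := by
        rw [hω]; simp [smul_eq_mul]
      rw [show (μ[fun ω => (2 * (q : ℝ)) • X ω|G]) = (μ[(2 * (q : ℝ)) • X|G]) from rfl, this]
    filter_upwards [h1, h2] with ω h1ω h2ω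
    calc 2 * q * ((μ[X|G]) ω) - (q : ℝ) ^ 2
        = (μ[fun ω => (2 * (q : ℝ)) • X ω - (q : ℝ) ^ 2|G]) ω := h2ω.symm
      _ ≤ (μ[fun ω' => (X ω') ^ 2|G]) ω := h1ω
  filter_upwards [ae_all_iff.mpr key] with ω hω
  exact sq_le_of_forall_rat hω

/-- **Ghosh–Louis theorem (inequality part).** For square-integrable random variables
`θ₁, …, θₙ` (`n ≥ 2`) and a sub-σ-algebra `G`, the empirical variance of the vector of
conditional means is a.s. bounded above by the conditional expectation of the empirical
variance of the ensemble. -/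
theorem ghosh_louis_inequality
    {Ω : Type*} {mΩ : MeasurableSpace Ω} {μ : Measure Ω} [IsProbabilityMeasure μ]
    {G : MeasurableSpace Ω} (hG : G ≤ mΩ)
    {n : ℕ} (hn : 2 ≤ n) (θ : Fin n → Ω → ℝ)
    (hθ : ∀ i, MeasureTheory.MemLp (θ i) 2 μ) :
    ∀ᵐ ω ∂μ,
      (1 / (n : ℝ)) * ∑ i, ((μ[θ i|G]) ω - (1 / (n : ℝ)) * ∑ j, (μ[θ j|G]) ω) ^ 2
        ≤ (μ[fun ω' => (1 / (n : ℝ)) * ∑ i, (θ i ω' - (1 / (n : ℝ)) * ∑ j, θ j ω') ^ 2|G]) ω := by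
  have hθint : ∀ i, Integrable (θ i) μ := fun i => (hθ i).integrable one_le_two
  -- the centered variables
  set X : Fin n → Ω → ℝ := fun i ω => θ i ω - (1 / (n : ℝ)) * ∑ j, θ j ω with hXdef
  have hXmem : ∀ i, MeasureTheory.MemLp (X i) 2 μ := by
    intro i
    have hsum : MeasureTheory.MemLp (fun ω => ∑ j, θ j ω) 2 μ :=
      memLp_finset_sum _ fun j _ => hθ j
    exact (hθ i).sub (hsum.const_mul (1 / (n : ℝ)))
  have hXint : ∀ i, Integrable (X i) μ := fun i => (hXmem i).integrable one_le_two
  have hX2int : ∀ i, Integrable (fun ω => (X i ω) ^ 2) μ := fun i => (hXmem i).integrable_sq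
  -- conditional expectation of X i
  have hcondX : ∀ i, μ[X i|G] =ᵐ[μ]
      fun ω => (μ[θ i|G]) ω - (1 / (n : ℝ)) * ∑ j, (μ[θ j|G]) ω := by
    intro i
    have hsumint : Integrable (fun ω => ∑ j, θ j ω) μ :=
      integrable_finset_sum _ fun j _ => hθint j
    have h1 : μ[(θ i) - (fun ω => (1 / (n : ℝ)) * ∑ j, θ j ω)|G] =ᵐ[μ]
        μ[θ i|G] - μ[fun ω => (1 / (n : ℝ)) * ∑ j, θ j ω|G] :=
      condExp_sub (m := G) (hθint i) (hsumint.const_mul _)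
    have h2 : μ[(1 / (n : ℝ)) • (fun ω => ∑ j, θ j ω)|G] =ᵐ[μ]
        (1 / (n : ℝ)) • μ[fun ω => ∑ j, θ j ω|G] :=
      condExp_smul (m := G) _ _
    have h3 : μ[∑ j, θ j|G] =ᵐ[μ] ∑ j, μ[θ j|G] :=
      condExp_finset_sum (m := G) fun j _ => hθint j
    have h4 : (fun ω => ∑ j, θ j ω) = ∑ j, θ j := by
      funext ω; simp [Finset.sum_apply]
    refine h1.trans ?_
    filter_upwards [h2, h3] with ω h2ω h3ω
    simp only [Pi.sub_apply]
    have e2 : (μ[fun ω => (1 / (n : ℝ)) * ∑ j, θ j ω|G]) ω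
        = (1 / (n : ℝ)) * (μ[fun ω => ∑ j, θ j ω|G]) ω := by
      have : (fun ω => (1 / (n : ℝ)) * ∑ j, θ j ω)
          = (1 / (n : ℝ)) • (fun ω => ∑ j, θ j ω) := by
        funext ω; simp [smul_eq_mul]
      rw [this, h2ω]; simp [smul_eq_mul]
    rw [e2]
    have e3 : (μ[fun ω => ∑ j, θ j ω|G]) ω = ∑ j, (μ[θ j|G]) ω := by
      rw [h4, h3ω]; simp [Finset.sum_apply]
    rw [e3]
  -- conditional expectation of the empirical variance
  have hvar : μ[fun ω' => (1 / (n : ℝ)) * ∑ i, (X i ω') ^ 2|G] =ᵐ[μ]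
      fun ω => (1 / (n : ℝ)) * ∑ i, (μ[fun ω' => (X i ω') ^ 2|G]) ω := by
    have h2 : μ[(1 / (n : ℝ)) • (fun ω' => ∑ i, (X i ω') ^ 2)|G] =ᵐ[μ]
        (1 / (n : ℝ)) • μ[fun ω' => ∑ i, (X i ω') ^ 2|G] :=
      condExp_smul (m := G) _ _
    have h3 : μ[∑ i, fun ω' => (X i ω') ^ 2|G] =ᵐ[μ] ∑ i, μ[fun ω' => (X i ω') ^ 2|G] :=
      condExp_finset_sum (m := G) fun i _ => hX2int i
    have h4 : (fun ω' => ∑ i, (X i ω') ^ 2) = ∑ i, fun ω' => (X i ω') ^ 2 := by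
      funext ω; simp [Finset.sum_apply]
    have h5 : (fun ω' => (1 / (n : ℝ)) * ∑ i, (X i ω') ^ 2)
        = (1 / (n : ℝ)) • (fun ω' => ∑ i, (X i ω') ^ 2) := by
      funext ω; simp [smul_eq_mul]
    rw [h5]
    refine h2.trans ?_
    filter_upwards [h3] with ω h3ω
    simp only [Pi.smul_apply, smul_eq_mul]
    rw [h4, h3ω]
    simp [Finset.sum_apply]
  -- Jensen for each X i
  have hjen : ∀ i, ∀ᵐ ω ∂μ, ((μ[X i|G]) ω) ^ 2 ≤ (μ[fun ω' => (X i ω') ^ 2|G]) ω :=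
    fun i => condExp_sq_ge hG (hXmem i)
  have hn0 : (0 : ℝ) ≤ 1 / (n : ℝ) := by positivity
  filter_upwards [hvar, ae_all_iff.mpr hjen, ae_all_iff.mpr hcondX] with ω hvarω hjenω hcondω
  have : (1 / (n : ℝ)) * ∑ i, ((μ[θ i|G]) ω - (1 / (n : ℝ)) * ∑ j, (μ[θ j|G]) ω) ^ 2
      ≤ (1 / (n : ℝ)) * ∑ i, (μ[fun ω' => (X i ω') ^ 2|G]) ω := by
    refine mul_le_mul_of_nonneg_left (Finset.sum_le_sum fun i _ => ?_) hn0
    rw [← hcondω i]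
    exact hjenω i
  exact this.trans_eq hvarω.symm
end

section
/- Ghosh–Louis theorem (equality condition): In the setting of the Ghosh–Louis inequality — (Ω,F,P) a probability space, G ⊆ F a sub-σ-algebra, θ₁,…,θₙ (n ≥ 2) square-integrable real random variables, θ̄ = (1/n)Σᵢθᵢ, mᵢ = E[θᵢ|G] — the equality E[(1/n)Σᵢ(θᵢ − θ̄)² | G] = (1/n)Σᵢ(mᵢ − (1/n)Σⱼmⱼ)² holds almost surely if and only if for every i the random variable θᵢ − θ̄ has a degenerate conditional distribution given G, i.e. θᵢ − θ̄ = E[θᵢ − θ̄ | G] almost surely for every i = 1,…,n. -/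
open MeasureTheory

open Filter
open scoped ENNReal

private lemma memLp_two_condexp {Ω : Type*} {G : MeasurableSpace Ω} {mΩ : MeasurableSpace Ω} {μ : Measure Ω}
    [IsFiniteMeasure μ] (hG : G ≤ mΩ) {f : Ω → ℝ}
    (hf : MemLp f 2 μ) : MemLp (μ[f|G]) 2 μ := by
  set g : Ω → ℝ := ((condExpL2 ℝ ℝ hG (hf.toLp f) : Lp ℝ 2 μ) : Ω → ℝ) with hg
  have hgL2 : MemLp g 2 μ := Lp.memLp _
  have h : g =ᵐ[μ] μ[f|G] := by
    refine ae_eq_condExp_of_forall_setIntegral_eq hG (hf.integrable one_le_two)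
      (fun s _ _ => (hgL2.integrable one_le_two).integrableOn) (fun s hs hμs => ?_) ?_
    · rw [hg, integral_condExpL2_eq hG (hf.toLp f) hs hμs.ne]
      exact setIntegral_congr_ae (hG s hs) ((hf.coeFn_toLp).mono fun x hx _ => hx)
    · exact lpMeas.aestronglyMeasurable _
  exact hgL2.ae_eq h

private lemma condexp_sq_decomp {Ω : Type*} {G : MeasurableSpace Ω} {mΩ : MeasurableSpace Ω}
    {μ : Measure Ω} [IsProbabilityMeasure μ] (hG : G ≤ mΩ) {f : Ω → ℝ}
    (hf : MemLp f 2 μ) :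
    μ[fun ω => f ω ^ 2|G] =ᵐ[μ]
      fun ω => (μ[fun ω' => (f ω' - (μ[f|G]) ω') ^ 2|G]) ω + (μ[f|G]) ω ^ 2 := by
  set Y : Ω → ℝ := μ[f|G] with hYdef
  have hYm : MemLp Y 2 μ := memLp_two_condexp hG hf
  have hZm : MemLp (fun ω => f ω - Y ω) 2 μ := hf.sub hYm
  have h1 : Integrable (fun ω => (f ω - Y ω) ^ 2) μ := hZm.integrable_sq
  have h3 : Integrable (fun ω => Y ω ^ 2) μ := hYm.integrable_sq
  have hpqr : (1 : ℝ≥0∞) / 1 = 1 / 2 + 1 / 2 := by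
    rw [ENNReal.div_add_div_same, one_add_one_eq_two, ENNReal.div_self two_ne_zero ENNReal.ofNat_ne_top, div_one]
  have h2m : MemLp (fun ω => (2 * Y ω) * (f ω - Y ω)) 1 μ :=
    hZm.smul (p := 2) (q := 2) (r := 1) (hYm.const_mul 2)
  have h2 : Integrable (fun ω => (2 * Y ω) * (f ω - Y ω)) μ := memLp_one_iff_integrable.mp h2m
  have key : (fun ω => f ω ^ 2) =
      fun ω => (f ω - Y ω) ^ 2 + ((2 * Y ω) * (f ω - Y ω) + Y ω ^ 2) := by
    funext ω; ring
  have e1 : μ[fun ω => f ω ^ 2|G] =ᵐ[μ]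
      μ[fun ω => (f ω - Y ω) ^ 2|G] + μ[fun ω => (2 * Y ω) * (f ω - Y ω) + Y ω ^ 2|G] := by
    rw [key]; exact condExp_add (m := G) h1 (h2.add h3)
  have e2 : μ[fun ω => (2 * Y ω) * (f ω - Y ω) + Y ω ^ 2|G] =ᵐ[μ]
      μ[fun ω => (2 * Y ω) * (f ω - Y ω)|G] + μ[fun ω => Y ω ^ 2|G] := condExp_add (m := G) h2 h3
  have e3 : μ[fun ω => (2 * Y ω) * (f ω - Y ω)|G] =ᵐ[μ]
      (fun ω => 2 * Y ω) * μ[fun ω => f ω - Y ω|G] :=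
    condExp_mul_of_stronglyMeasurable_left (stronglyMeasurable_const.mul stronglyMeasurable_condExp)
      h2 (hZm.integrable one_le_two)
  have e4 : μ[fun ω => f ω - Y ω|G] =ᵐ[μ] 0 := by
    refine (condExp_sub (m := G) (hf.integrable one_le_two) integrable_condExp).trans ?_
    rw [condExp_of_stronglyMeasurable hG stronglyMeasurable_condExp integrable_condExp]
    simp
  have e5 : μ[fun ω => Y ω ^ 2|G] = fun ω => Y ω ^ 2 :=
    condExp_of_stronglyMeasurable hG (stronglyMeasurable_condExp.pow 2) h3
  filter_upwards [e1, e2, e3, e4] with ω k1 k2 k3 k4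
  have k5 := congrFun e5 ω
  simp only [Pi.add_apply, Pi.mul_apply, Pi.zero_apply] at k1 k2 k3 k4 k5 ⊢
  rw [k1, k2, k3, k4, k5]; ring

private lemma condexp_sq_eq_zero_iff {Ω : Type*} {G : MeasurableSpace Ω} {mΩ : MeasurableSpace Ω}
    {μ : Measure Ω} [IsProbabilityMeasure μ] (hG : G ≤ mΩ) {f : Ω → ℝ}
    (hf : MemLp f 2 μ) :
    μ[fun ω => (f ω - (μ[f|G]) ω) ^ 2|G] =ᵐ[μ] (0 : Ω → ℝ) ↔ f =ᵐ[μ] μ[f|G] := by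
  have hYm : MemLp (μ[f|G]) 2 μ := memLp_two_condexp hG hf
  have hint : Integrable (fun ω => (f ω - (μ[f|G]) ω) ^ 2) μ := (hf.sub hYm).integrable_sq
  constructor
  · intro h
    have hzero : ∫ ω, (f ω - (μ[f|G]) ω) ^ 2 ∂μ = 0 := by
      rw [← integral_condExp hG (f := fun ω => (f ω - (μ[f|G]) ω) ^ 2)]
      calc ∫ ω, (μ[fun ω' => (f ω' - (μ[f|G]) ω') ^ 2|G]) ω ∂μ
          = ∫ ω, (0 : Ω → ℝ) ω ∂μ := integral_congr_ae h
        _ = 0 := by simp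
    have h2 := (integral_eq_zero_iff_of_nonneg_ae
      (Eventually.of_forall fun ω => sq_nonneg _) hint).mp hzero
    filter_upwards [h2] with ω hω
    have h3 : (f ω - (μ[f|G]) ω) ^ 2 = 0 := hω
    have h4 : f ω - (μ[f|G]) ω = 0 := by
      nlinarith [sq_nonneg (f ω - (μ[f|G]) ω)]
    linarith
  · intro h
    have h2 : (fun ω => (f ω - (μ[f|G]) ω) ^ 2) =ᵐ[μ] (0 : Ω → ℝ) := by
      filter_upwards [h] with ω hω
      simp [hω]
    calc μ[fun ω => (f ω - (μ[f|G]) ω) ^ 2|G] =ᵐ[μ] μ[(0 : Ω → ℝ)|G] := condExp_congr_ae h2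
      _ = 0 := condExp_zero

/-- **Ghosh–Louis theorem (equality condition).** In the setting of the Ghosh–Louis
inequality, equality holds almost surely if and only if every centred variable
`θᵢ − θ̄` has a degenerate conditional distribution given `G`, i.e. coincides a.s. with
its conditional expectation given `G`. -/
theorem ghosh_louis_equality
    {Ω : Type*} {mΩ : MeasurableSpace Ω} {μ : Measure Ω} [IsProbabilityMeasure μ]
    {G : MeasurableSpace Ω} (hG : G ≤ mΩ)
    {n : ℕ} (hn : 2 ≤ n) (θ : Fin n → Ω → ℝ)
    (hθ : ∀ i, MeasureTheory.MemLp (θ i) 2 μ) :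
    ((μ[fun ω' => (1 / (n : ℝ)) * ∑ i, (θ i ω' - (1 / (n : ℝ)) * ∑ j, θ j ω') ^ 2|G])
        =ᵐ[μ]
      fun ω => (1 / (n : ℝ)) * ∑ i, ((μ[θ i|G]) ω - (1 / (n : ℝ)) * ∑ j, (μ[θ j|G]) ω) ^ 2)
    ↔ ∀ i, (fun ω => θ i ω - (1 / (n : ℝ)) * ∑ j, θ j ω)
        =ᵐ[μ] (μ[fun ω => θ i ω - (1 / (n : ℝ)) * ∑ j, θ j ω|G]) := by
  letI : MeasurableSpace Ω := mΩ
  have hn0 : ((n : ℝ)) ≠ 0 := Nat.cast_ne_zero.mpr (by omega)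
  have hc0 : (1 / (n : ℝ)) ≠ 0 := one_div_ne_zero hn0
  set X : Fin n → Ω → ℝ := fun i ω => θ i ω - (1 / (n : ℝ)) * ∑ j, θ j ω with hXdef
  have hsum : MemLp (fun ω => ∑ j, θ j ω) 2 μ :=
    memLp_finset_sum Finset.univ (fun i _ => hθ i)
  have hXm : ∀ i, MemLp (X i) 2 μ := fun i => (hθ i).sub (hsum.const_mul _)
  set Y : Fin n → Ω → ℝ := fun i => μ[X i|G] with hYdef
  have hYm : ∀ i, MemLp (Y i) 2 μ := fun i => memLp_two_condexp hG (hXm i)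
  set D : Fin n → Ω → ℝ := fun i => μ[fun ω => (X i ω - Y i ω) ^ 2|G] with hDdef
  -- decomposition
  have hdecomp : ∀ i, μ[fun ω => X i ω ^ 2|G] =ᵐ[μ] fun ω => D i ω + Y i ω ^ 2 :=
    fun i => condexp_sq_decomp hG (hXm i)
  -- sums of functions
  have hfun3 : (fun ω' => ∑ i, (X i ω') ^ 2) = ∑ i, (fun ω' => (X i ω') ^ 2) := by
    funext ω'; simp
  have hfun2 : (fun ω => ∑ j, θ j ω) = ∑ j, θ j := by funext ω; simp
  -- LHS identification
  have hs1 : (μ[fun ω' => (1 / (n : ℝ)) * ∑ i, (X i ω') ^ 2|G]) =ᵐ[μ]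
      (1 / (n : ℝ)) • (μ[fun ω' => ∑ i, (X i ω') ^ 2|G]) :=
    condExp_smul (m := G) ((1 : ℝ) / n) (fun ω' => ∑ i, (X i ω') ^ 2)
  have hs2 : (μ[fun ω' => ∑ i, (X i ω') ^ 2|G]) =ᵐ[μ]
      ∑ i, (μ[fun ω' => (X i ω') ^ 2|G]) := by
    rw [hfun3]
    exact condExp_finsetSum (m := G) fun i _ => (hXm i).integrable_sq
  have hLHS : (μ[fun ω' => (1 / (n : ℝ)) * ∑ i, (X i ω') ^ 2|G]) =ᵐ[μ]
      fun ω => (1 / (n : ℝ)) * ∑ i, (D i ω + Y i ω ^ 2) := by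
    filter_upwards [hs1, hs2, ae_all_iff.mpr hdecomp] with ω k1 k2 k3
    simp only [Pi.smul_apply, smul_eq_mul, Finset.sum_apply] at k1 k2
    rw [k1, k2]
    congr 1
    exact Finset.sum_congr rfl fun i _ => k3 i
  -- RHS identification
  have hYrep : ∀ i, (fun ω => (μ[θ i|G]) ω - (1 / (n : ℝ)) * ∑ j, (μ[θ j|G]) ω)
      =ᵐ[μ] Y i := by
    intro i
    have t1 : Y i =ᵐ[μ] μ[θ i|G] - μ[fun ω => (1 / (n : ℝ)) * ∑ j, θ j ω|G] :=
      condExp_sub (m := G) ((hθ i).integrable one_le_two) ((hsum.const_mul _).integrable one_le_two)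
    have t2 : (μ[fun ω => (1 / (n : ℝ)) * ∑ j, θ j ω|G]) =ᵐ[μ]
        (1 / (n : ℝ)) • (μ[fun ω => ∑ j, θ j ω|G]) :=
      condExp_smul (m := G) ((1 : ℝ) / n) (fun ω => ∑ j, θ j ω)
    have t3 : (μ[fun ω => ∑ j, θ j ω|G]) =ᵐ[μ] ∑ j, (μ[θ j|G]) := by
      rw [hfun2]
      exact condExp_finsetSum (m := G) fun j _ => (hθ j).integrable one_le_two
    filter_upwards [t1, t2, t3] with ω k1 k2 k3
    simp only [Pi.sub_apply, Pi.smul_apply, smul_eq_mul, Finset.sum_apply] at k1 k2 k3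
    rw [k1, k2, k3]
  have hRHS : (fun ω => (1 / (n : ℝ)) * ∑ i, ((μ[θ i|G]) ω - (1 / (n : ℝ)) * ∑ j, (μ[θ j|G]) ω) ^ 2)
      =ᵐ[μ] fun ω => (1 / (n : ℝ)) * ∑ i, Y i ω ^ 2 := by
    filter_upwards [ae_all_iff.mpr hYrep] with ω k
    congr 1
    exact Finset.sum_congr rfl fun i _ => by rw [k i]
  -- key equivalences
  have key1 : ((μ[fun ω' => (1 / (n : ℝ)) * ∑ i, (X i ω') ^ 2|G]) =ᵐ[μ]
      fun ω => (1 / (n : ℝ)) * ∑ i, ((μ[θ i|G]) ω - (1 / (n : ℝ)) * ∑ j, (μ[θ j|G]) ω) ^ 2)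
      ↔ ((fun ω => ∑ i, D i ω) =ᵐ[μ] (0 : Ω → ℝ)) := by
    constructor
    · intro h
      have h' := (hLHS.symm.trans h).trans hRHS
      filter_upwards [h'] with ω hω
      have h2 := mul_left_cancel₀ hc0 hω
      rw [Finset.sum_add_distrib] at h2
      simpa using h2
    · intro h
      refine hLHS.trans (EventuallyEq.trans ?_ hRHS.symm)
      filter_upwards [h] with ω hω
      simp only [Pi.zero_apply] at hω
      rw [Finset.sum_add_distrib, hω, zero_add]
  have key2 : ((fun ω => ∑ i, D i ω) =ᵐ[μ] (0 : Ω → ℝ)) ↔ ∀ i, D i =ᵐ[μ] (0 : Ω → ℝ) := by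
    constructor
    · intro h i
      have hnn : ∀ j, ∀ᵐ ω ∂μ, (0 : ℝ) ≤ D j ω := fun j =>
        condExp_nonneg (Eventually.of_forall fun ω => sq_nonneg _)
      filter_upwards [h, ae_all_iff.mpr hnn] with ω h1 h2
      simp only [Pi.zero_apply] at h1 ⊢
      exact (Finset.sum_eq_zero_iff_of_nonneg fun j _ => h2 j).mp h1 i (Finset.mem_univ i)
    · intro h
      filter_upwards [ae_all_iff.mpr h] with ω hω
      simp only [Pi.zero_apply] at hω ⊢
      exact Finset.sum_eq_zero fun i _ => hω i
  have key3 : ∀ i, (D i =ᵐ[μ] (0 : Ω → ℝ) ↔ X i =ᵐ[μ] Y i) :=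
    fun i => condexp_sq_eq_zero_iff hG (hXm i)
  exact key1.trans (key2.trans (forall_congr' key3))
end

section
/- Ghosh–Louis constrained Bayes estimator: Let n ≥ 2, let m ∈ ℝⁿ be a vector of posterior means with m̄ = (1/n)Σᵢmᵢ and S = (1/n)Σᵢ(mᵢ − m̄)² > 0, and let v ∈ ℝⁿ be a vector of nonnegative posterior variances with v̄ = (1/n)Σᵢvᵢ. Set ω = √(1 + v̄/S) and aᵢ* = ω·mᵢ + (1 − ω)·m̄ for i = 1,…,n. Then: (i) (1/n)Σᵢaᵢ* = m̄ and (1/n)Σᵢ(aᵢ* − m̄)² = S + v̄; and (ii) for every a ∈ ℝⁿ satisfying the two constraints (1/n)Σᵢaᵢ = m̄ and (1/n)Σᵢ(aᵢ − (1/n)Σⱼaⱼ)² = S + v̄, one has Σᵢ(vᵢ + (mᵢ − aᵢ*)²) ≤ Σᵢ(vᵢ + (mᵢ − aᵢ)²). Thus a* minimises the posterior expected summed squared error loss among all ensembles of point estimates whose empirical mean equals the posterior mean of the ensemble's empirical mean and whose empirical variance equals S + v̄. -/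
/-- **Ghosh–Louis constrained Bayes estimator.** Given posterior means `m` with empirical
mean `mbar` and positive empirical variance `S`, and nonnegative posterior variances `v`
with mean `vbar`, the estimator `aᵢ* = ω mᵢ + (1 − ω) mbar` with `ω = √(1 + vbar/S)`
matches the prescribed empirical mean `mbar` and empirical variance `S + vbar`, and
minimises the posterior expected summed squared error loss `Σᵢ (vᵢ + (mᵢ − aᵢ)²)` among
all point-estimate vectors satisfying these two constraints. -/
theorem constrained_bayes_estimator
    {n : ℕ} (hn : 2 ≤ n) (m v : Fin n → ℝ) (hv : ∀ i, 0 ≤ v i)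
    (mbar : ℝ) (hmbar : mbar = (1 / (n : ℝ)) * ∑ i, m i)
    (S : ℝ) (hS : S = (1 / (n : ℝ)) * ∑ i, (m i - mbar) ^ 2) (hSpos : 0 < S)
    (vbar : ℝ) (hvbar : vbar = (1 / (n : ℝ)) * ∑ i, v i)
    (ω : ℝ) (hω : ω = Real.sqrt (1 + vbar / S))
    (astar : Fin n → ℝ) (hastar : ∀ i, astar i = ω * m i + (1 - ω) * mbar) :
    ((1 / (n : ℝ)) * ∑ i, astar i = mbar ∧
      (1 / (n : ℝ)) * ∑ i, (astar i - mbar) ^ 2 = S + vbar) ∧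
    ∀ a : Fin n → ℝ,
      (1 / (n : ℝ)) * ∑ i, a i = mbar →
      (1 / (n : ℝ)) * ∑ i, (a i - (1 / (n : ℝ)) * ∑ j, a j) ^ 2 = S + vbar →
      ∑ i, (v i + (m i - astar i) ^ 2) ≤ ∑ i, (v i + (m i - a i) ^ 2) := by
  have hn0 : 0 < n := lt_of_lt_of_le two_pos hn
  have hc : (0:ℝ) < (n:ℝ) := by exact_mod_cast hn0
  have hcne : (n:ℝ) ≠ 0 := ne_of_gt hc
  have hsum_m : ∑ i, m i = (n:ℝ) * mbar := by
    rw [hmbar]; field_simp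
  have hSS : ∑ i, (m i - mbar)^2 = (n:ℝ) * S := by
    rw [hS]; field_simp
  have hvb : 0 ≤ vbar := by
    rw [hvbar]
    exact mul_nonneg (by positivity) (Finset.sum_nonneg fun i _ => hv i)
  have hω0 : 0 ≤ ω := hω ▸ Real.sqrt_nonneg _
  have hω2 : ω ^ 2 = 1 + vbar / S := by
    rw [hω, Real.sq_sqrt (by positivity)]
  have hω2S : ω ^ 2 * S = S + vbar := by
    rw [hω2]; field_simp
  have hmean : (1 / (n : ℝ)) * ∑ i, astar i = mbar := by
    have : ∑ i, astar i = ∑ i, (ω * m i + (1 - ω) * mbar) :=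
      Finset.sum_congr rfl fun i _ => by rw [hastar]
    rw [this, Finset.sum_add_distrib, ← Finset.mul_sum, hsum_m, Finset.sum_const,
      Finset.card_univ, Fintype.card_fin, nsmul_eq_mul]
    field_simp; ring
  have hvar : (1 / (n : ℝ)) * ∑ i, (astar i - mbar) ^ 2 = S + vbar := by
    have : ∑ i, (astar i - mbar) ^ 2 = ∑ i, ω ^ 2 * (m i - mbar) ^ 2 :=
      Finset.sum_congr rfl fun i _ => by rw [hastar]; ring
    rw [this, ← Finset.mul_sum, hSS]
    field_simp
    nlinarith [hω2S]
  refine ⟨⟨hmean, hvar⟩, ?_⟩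
  intro a ha1 ha2
  rw [ha1] at ha2
  have hsumA : ∑ i, (a i - mbar) ^ 2 = (n:ℝ) * (S + vbar) := by
    field_simp at ha2; linarith [ha2]
  set t := ∑ i, (m i - mbar) * (a i - mbar) with ht
  have hcs : t ^ 2 ≤ ((n:ℝ) * S) * ((n:ℝ) * (S + vbar)) := by
    have := Finset.sum_mul_sq_le_sq_mul_sq Finset.univ (fun i => m i - mbar)
      (fun i => a i - mbar)
    calc t ^ 2 ≤ (∑ i, (m i - mbar)^2) * ∑ i, (a i - mbar)^2 := by
          simpa [ht, sq] using this
      _ = ((n:ℝ) * S) * ((n:ℝ) * (S + vbar)) := by rw [hSS, hsumA]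
  have hkey : t ≤ ω * ((n:ℝ) * S) := by
    have hy : 0 ≤ ω * ((n:ℝ) * S) := by positivity
    have hysq : (ω * ((n:ℝ) * S)) ^ 2 = ((n:ℝ) * S) * ((n:ℝ) * (S + vbar)) := by
      linear_combination ((n:ℝ)^2 * S) * hω2S
    calc t ≤ |t| := le_abs_self t
      _ = Real.sqrt (t ^ 2) := (Real.sqrt_sq_eq_abs t).symm
      _ ≤ Real.sqrt ((ω * ((n:ℝ) * S)) ^ 2) := Real.sqrt_le_sqrt (by rw [hysq]; exact hcs)
      _ = ω * ((n:ℝ) * S) := Real.sqrt_sq hy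
  have expand_a : ∑ i, (m i - a i) ^ 2
      = (n:ℝ) * S + (n:ℝ) * (S + vbar) - 2 * t := by
    have : ∑ i, (m i - a i) ^ 2
        = ∑ i, ((m i - mbar)^2 + (a i - mbar)^2 - 2 * ((m i - mbar) * (a i - mbar))) :=
      Finset.sum_congr rfl fun i _ => by ring
    rw [this, Finset.sum_sub_distrib, Finset.sum_add_distrib, ← Finset.mul_sum,
      hSS, hsumA, ht]
  have expand_astar : ∑ i, (m i - astar i) ^ 2 = (1 - ω) ^ 2 * ((n:ℝ) * S) := by
    have : ∑ i, (m i - astar i) ^ 2 = ∑ i, (1 - ω) ^ 2 * (m i - mbar) ^ 2 :=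
      Finset.sum_congr rfl fun i _ => by rw [hastar]; ring
    rw [this, ← Finset.mul_sum, hSS]
  rw [Finset.sum_add_distrib, Finset.sum_add_distrib, expand_a, expand_astar]
  have : (1 - ω) ^ 2 * ((n:ℝ) * S) ≤ (n:ℝ) * S + (n:ℝ) * (S + vbar) - 2 * t := by
    nlinarith [hkey, hω2S]
  linarith
end

section
/- Optimality of posterior quantiles under weighted threshold classification loss: Let θ₁,…,θₙ be real random variables on a probability space, let C ∈ ℝ be a threshold and let p ∈ (0,1). For each i let Fᵢ(x) = P(θᵢ ≤ x) and let qᵢ = inf{x ∈ ℝ : Fᵢ(x) ≥ 1−p} be the posterior (1−p)-quantile of θᵢ. Then the vector q = (q₁,…,qₙ) minimises the expected weighted threshold classification loss: for every δ ∈ ℝⁿ, E[TCL_p(C,θ,δ)] ≥ E[TCL_p(C,θ,q)]. -/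
open MeasureTheory

/-- The `p`-weighted threshold classification loss
`TCL_p(C, θ, δ) = (1/n) Σᵢ [p · 1{θᵢ ≤ C, δᵢ > C} + (1−p) · 1{θᵢ > C, δᵢ ≤ C}]`. -/
noncomputable def TCLw (n : ℕ) (p C : ℝ) (θ δ : Fin n → ℝ) : ℝ :=
  (1 / (n : ℝ)) * ∑ i, (p * (if θ i ≤ C ∧ C < δ i then (1 : ℝ) else 0)
    + (1 - p) * (if C < θ i ∧ δ i ≤ C then (1 : ℝ) else 0))

section Aux

variable {Ω : Type*} [MeasurableSpace Ω] (μ : Measure Ω) [IsProbabilityMeasure μ]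

/-- Monotonicity of the CDF. -/
lemma tclF_mono (θ : Ω → ℝ) {a b : ℝ} (h : a ≤ b) :
    (μ {ω | θ ω ≤ a}).toReal ≤ (μ {ω | θ ω ≤ b}).toReal := by
  refine ENNReal.toReal_mono (measure_ne_top _ _) ?_
  exact measure_mono (fun ω hω => le_trans hω h)

lemma tclF_nonneg (θ : Ω → ℝ) (a : ℝ) : 0 ≤ (μ {ω | θ ω ≤ a}).toReal :=
  ENNReal.toReal_nonneg

lemma tclF_le_one (θ : Ω → ℝ) (a : ℝ) : (μ {ω | θ ω ≤ a}).toReal ≤ 1 := by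
  have : μ {ω | θ ω ≤ a} ≤ 1 := prob_le_one
  simpa using ENNReal.toReal_mono (by simp) this

/-- The quantile set is nonempty and bounded below. -/
lemma tcl_quantile_set (θ : Ω → ℝ) (hθ : Measurable θ) {p : ℝ}
    (hp0 : 0 < p) (hp1 : p < 1) :
    ({x : ℝ | 1 - p ≤ (μ {ω | θ ω ≤ x}).toReal}).Nonempty ∧
    BddBelow {x : ℝ | 1 - p ≤ (μ {ω | θ ω ≤ x}).toReal} := by
  constructor
  · -- nonempty: F tends to 1
    have hmono : Monotone (fun k : ℕ => {ω | θ ω ≤ (k : ℝ)}) := by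
      intro a b hab ω hω
      simp only [Set.mem_setOf_eq] at hω ⊢
      exact le_trans hω (by exact_mod_cast hab)
    have hU : (⋃ k : ℕ, {ω | θ ω ≤ (k : ℝ)}) = Set.univ := by
      ext ω; simp only [Set.mem_iUnion, Set.mem_univ, iff_true, Set.mem_setOf_eq]
      obtain ⟨k, hk⟩ := exists_nat_ge (θ ω)
      exact ⟨k, hk⟩
    have htd := tendsto_measure_iUnion_atTop (μ := μ) hmono
    rw [hU] at htd
    simp only [measure_univ] at htd
    have htd' : Filter.Tendsto (fun k : ℕ => (μ {ω | θ ω ≤ (k : ℝ)}).toReal)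
        Filter.atTop (nhds 1) := by
      have := (ENNReal.tendsto_toReal (by simp : (1 : ENNReal) ≠ ⊤)).comp htd
      simpa [Function.comp_def] using this
    have : ∀ᶠ k : ℕ in Filter.atTop, 1 - p < (μ {ω | θ ω ≤ (k : ℝ)}).toReal :=
      htd'.eventually_const_lt (by linarith)
    obtain ⟨k, hk⟩ := this.exists
    exact ⟨(k : ℝ), le_of_lt hk⟩
  · -- bdd below: F tends to 0 at -∞
    have hanti : Antitone (fun k : ℕ => {ω | θ ω ≤ -(k : ℝ)}) := by
      intro a b hab ω hω
      simp only [Set.mem_setOf_eq] at hω ⊢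
      have : (a:ℝ) ≤ b := by exact_mod_cast hab
      linarith
    have hI : (⋂ k : ℕ, {ω | θ ω ≤ -(k : ℝ)}) = ∅ := by
      ext ω; simp only [Set.mem_iInter, Set.mem_empty_iff_false, iff_false, not_forall,
        Set.mem_setOf_eq, not_le]
      obtain ⟨k, hk⟩ := exists_nat_gt (-(θ ω))
      exact ⟨k, by linarith⟩
    have htd := tendsto_measure_iInter_atTop (μ := μ)
      (fun k => (hθ measurableSet_Iic).nullMeasurableSet) hanti
      ⟨0, measure_ne_top _ _⟩
    · have hset : ∀ c : ℝ, θ ⁻¹' Set.Iic c = {ω | θ ω ≤ c} := fun c => rfl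
      simp only [Function.comp_def, hset] at htd
      rw [hI] at htd
      simp only [measure_empty] at htd
      have htd' : Filter.Tendsto (fun k : ℕ => (μ {ω | θ ω ≤ -(k : ℝ)}).toReal)
          Filter.atTop (nhds 0) := by
        have := (ENNReal.tendsto_toReal (by simp : (0 : ENNReal) ≠ ⊤)).comp htd
        simpa [Function.comp_def] using this
      have : ∀ᶠ k : ℕ in Filter.atTop, (μ {ω | θ ω ≤ -(k : ℝ)}).toReal < 1 - p :=
        htd'.eventually_lt_const (by linarith)
      obtain ⟨k, hk⟩ := this.exists
      refine ⟨-(k : ℝ), fun s hs => ?_⟩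
      by_contra hcon
      push_neg at hcon
      have := tclF_mono μ θ (le_of_lt hcon)
      have hs' : 1 - p ≤ (μ {ω | θ ω ≤ s}).toReal := hs
      linarith

/-- If the quantile is ≤ C then F(C) ≥ 1 - p (right continuity of the CDF). -/
lemma tcl_quantile_le (θ : Ω → ℝ) (hθ : Measurable θ) {p C : ℝ}
    (hp0 : 0 < p) (hp1 : p < 1)
    (h : sInf {x : ℝ | 1 - p ≤ (μ {ω | θ ω ≤ x}).toReal} ≤ C) :
    1 - p ≤ (μ {ω | θ ω ≤ C}).toReal := by
  obtain ⟨hne, hbdd⟩ := tcl_quantile_set μ θ hθ hp0 hp1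
  -- for every x > C, F x ≥ 1 - p
  have key : ∀ x : ℝ, C < x → 1 - p ≤ (μ {ω | θ ω ≤ x}).toReal := by
    intro x hx
    have : sInf {x : ℝ | 1 - p ≤ (μ {ω | θ ω ≤ x}).toReal} < x := lt_of_le_of_lt h hx
    obtain ⟨s, hs, hsx⟩ := (csInf_lt_iff hbdd hne).mp this
    exact le_trans hs (tclF_mono μ θ (le_of_lt hsx))
  -- {θ ≤ C} = ⋂ k, {θ ≤ C + 1/(k+1)}
  have hI : {ω | θ ω ≤ C} = ⋂ k : ℕ, {ω | θ ω ≤ C + 1/(k+1)} := by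
    ext ω
    simp only [Set.mem_iInter, Set.mem_setOf_eq]
    constructor
    · intro hω k
      have : (0 : ℝ) < 1/(k+1) := by positivity
      linarith
    · intro hω
      by_contra hcon
      push_neg at hcon
      obtain ⟨k, hk⟩ := exists_nat_one_div_lt (by linarith : (0:ℝ) < θ ω - C)
      have := hω k
      have hk' : 1 / ((k:ℝ) + 1) < θ ω - C := hk
      linarith
  have hanti : Antitone (fun k : ℕ => {ω | θ ω ≤ C + 1/(k+1)}) := by
    intro a b hab ω hω
    simp only [Set.mem_setOf_eq] at hω ⊢
    have h1 : (1:ℝ)/(b+1) ≤ 1/(a+1) := by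
      apply one_div_le_one_div_of_le (by positivity)
      have : (a:ℝ) ≤ b := by exact_mod_cast hab
      linarith
    linarith
  have htd := tendsto_measure_iInter_atTop (μ := μ)
    (fun k => (hθ measurableSet_Iic).nullMeasurableSet) hanti
    ⟨0, measure_ne_top _ _⟩
  have hset : ∀ c : ℝ, θ ⁻¹' Set.Iic c = {ω | θ ω ≤ c} := fun c => rfl
  simp only [Function.comp_def, hset] at htd
  rw [← hI] at htd
  have htd' : Filter.Tendsto (fun k : ℕ => (μ {ω | θ ω ≤ C + 1/(k+1)}).toReal)
      Filter.atTop (nhds (μ {ω | θ ω ≤ C}).toReal) := by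
    have := (ENNReal.tendsto_toReal (measure_ne_top μ _)).comp htd
    simpa [Function.comp_def] using this
  refine ge_of_tendsto htd' (Filter.Eventually.of_forall fun k => ?_)
  refine key _ ?_
  have : (0:ℝ) < 1/((k:ℝ)+1) := by positivity
  linarith

/-- If the quantile is > C then F(C) ≤ 1 - p. -/
lemma tcl_quantile_gt (θ : Ω → ℝ) (hθ : Measurable θ) {p C : ℝ}
    (hp0 : 0 < p) (hp1 : p < 1)
    (h : C < sInf {x : ℝ | 1 - p ≤ (μ {ω | θ ω ≤ x}).toReal}) :
    (μ {ω | θ ω ≤ C}).toReal ≤ 1 - p := by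
  obtain ⟨hne, hbdd⟩ := tcl_quantile_set μ θ hθ hp0 hp1
  by_contra hcon
  push_neg at hcon
  have : C ∈ {x : ℝ | 1 - p ≤ (μ {ω | θ ω ≤ x}).toReal} := le_of_lt hcon
  exact absurd (csInf_le hbdd this) (not_le.mpr h)

/-- Expected per-coordinate loss. -/
lemma tcl_integral_coord (θ : Ω → ℝ) (hθ : Measurable θ) (p C d : ℝ) :
    ∫ ω, (p * (if θ ω ≤ C ∧ C < d then (1:ℝ) else 0)
      + (1 - p) * (if C < θ ω ∧ d ≤ C then (1:ℝ) else 0)) ∂μ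
    = (if C < d then p * (μ {ω | θ ω ≤ C}).toReal else 0)
      + (if d ≤ C then (1 - p) * (1 - (μ {ω | θ ω ≤ C}).toReal) else 0) := by
  have hmeas : MeasurableSet {ω | θ ω ≤ C} := hθ measurableSet_Iic
  have hcompl : {ω | C < θ ω} = {ω | θ ω ≤ C}ᶜ := by
    ext ω; simp [not_le]
  have hFc : (μ {ω | C < θ ω}).toReal = 1 - (μ {ω | θ ω ≤ C}).toReal := by
    rw [hcompl, measure_compl hmeas (measure_ne_top _ _), measure_univ,
      ENNReal.toReal_sub_of_le prob_le_one (by simp)]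
    simp
  by_cases hd : d ≤ C
  · have hnd : ¬ C < d := not_lt.mpr hd
    simp only [hd, hnd, if_true, if_false, and_true, and_false, mul_zero, mul_one,
      if_false, zero_add]
    have : ∀ ω, (if C < θ ω then (1 - p) * 1 else 0)
        = {ω | C < θ ω}.indicator (fun _ => (1 - p)) ω := by
      intro ω
      simp [Set.indicator_apply, Set.mem_setOf_eq]
    calc ∫ ω, ((1 - p) * (if C < θ ω then (1:ℝ) else 0)) ∂μ
        = ∫ ω, {ω | C < θ ω}.indicator (fun _ => (1 - p)) ω ∂μ := by
          refine integral_congr_ae (Filter.Eventually.of_forall fun ω => ?_)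
          by_cases h : C < θ ω <;> simp [Set.indicator_apply, Set.mem_setOf_eq, h]
      _ = (μ {ω | C < θ ω}).toReal • (1 - p) := by
          exact integral_indicator_const _ (by rw [hcompl]; exact hmeas.compl)
      _ = (1 - p) * (1 - (μ {ω | θ ω ≤ C}).toReal) := by
          rw [hFc]; ring_nf
  · have hd' : C < d := not_le.mp hd
    simp only [hd, hd', if_true, if_false, and_true, and_false, mul_zero, mul_one,
      add_zero]
    calc ∫ ω, (p * (if θ ω ≤ C then (1:ℝ) else 0)) ∂μ
        = ∫ ω, {ω | θ ω ≤ C}.indicator (fun _ => p) ω ∂μ := by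
          refine integral_congr_ae (Filter.Eventually.of_forall fun ω => ?_)
          by_cases h : θ ω ≤ C <;> simp [Set.indicator_apply, Set.mem_setOf_eq, h]
      _ = (μ {ω | θ ω ≤ C}).toReal • p := integral_indicator_const _ hmeas
      _ = p * (μ {ω | θ ω ≤ C}).toReal := by rw [smul_eq_mul]; ring

lemma tcl_integrable_coord (θ : Ω → ℝ) (hθ : Measurable θ) (p C d : ℝ) :
    Integrable (fun ω => (p * (if θ ω ≤ C ∧ C < d then (1:ℝ) else 0)
      + (1 - p) * (if C < θ ω ∧ d ≤ C then (1:ℝ) else 0))) μ := by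
  have h1 : Integrable (fun ω => (if θ ω ≤ C ∧ C < d then (1:ℝ) else 0)) μ := by
    by_cases hd : C < d
    · have : (fun ω => (if θ ω ≤ C ∧ C < d then (1:ℝ) else 0))
          = {ω | θ ω ≤ C}.indicator (fun _ => (1:ℝ)) := by
        ext ω
        by_cases h : θ ω ≤ C <;> simp [Set.indicator_apply, Set.mem_setOf_eq, h, hd]
      rw [this]
      exact (integrable_const 1).indicator (hθ measurableSet_Iic)
    · simp only [hd, and_false, if_false]
      exact integrable_const 0
  have h2 : Integrable (fun ω => (if C < θ ω ∧ d ≤ C then (1:ℝ) else 0)) μ := by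
    by_cases hd : d ≤ C
    · have : (fun ω => (if C < θ ω ∧ d ≤ C then (1:ℝ) else 0))
          = {ω | C < θ ω}.indicator (fun _ => (1:ℝ)) := by
        ext ω
        by_cases h : C < θ ω <;> simp [Set.indicator_apply, Set.mem_setOf_eq, h, hd]
      rw [this]
      have : MeasurableSet {ω | C < θ ω} := by
        have : {ω | C < θ ω} = {ω | θ ω ≤ C}ᶜ := by ext ω; simp [not_le]
        rw [this]; exact (hθ measurableSet_Iic).compl
      exact (integrable_const 1).indicator this
    · simp only [hd, and_false, if_false]
      exact integrable_const 0
  exact (h1.const_mul p).add (h2.const_mul (1 - p))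

end Aux

/-- **Optimality of posterior quantiles under weighted threshold classification loss.**
The vector of posterior `(1−p)`-quantiles minimises the expected `p`-weighted threshold
classification loss. -/
theorem tcl_weighted_quantile_optimal
    {Ω : Type*} [MeasurableSpace Ω] (μ : Measure Ω) [IsProbabilityMeasure μ]
    {n : ℕ} (θ : Fin n → Ω → ℝ) (hθ : ∀ i, Measurable (θ i))
    (C p : ℝ) (hp : p ∈ Set.Ioo (0 : ℝ) 1)
    (q : Fin n → ℝ)
    (hq : ∀ i, q i = sInf {x : ℝ | 1 - p ≤ (μ {ω | θ i ω ≤ x}).toReal}) :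
    ∀ δ : Fin n → ℝ,
      ∫ ω, TCLw n p C (fun i => θ i ω) q ∂μ ≤
        ∫ ω, TCLw n p C (fun i => θ i ω) δ ∂μ := by
  obtain ⟨hp0, hp1⟩ := hp
  intro δ
  -- compute the integral for an arbitrary decision vector
  have key : ∀ d : Fin n → ℝ,
      ∫ ω, TCLw n p C (fun i => θ i ω) d ∂μ
      = (1 / (n:ℝ)) * ∑ i, ((if C < d i then p * (μ {ω | θ i ω ≤ C}).toReal else 0)
          + (if d i ≤ C then (1 - p) * (1 - (μ {ω | θ i ω ≤ C}).toReal) else 0)) := by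
    intro d
    simp only [TCLw]
    rw [integral_const_mul, integral_finset_sum _
      (fun i _ => tcl_integrable_coord μ (θ i) (hθ i) p C (d i))]
    congr 1
    exact Finset.sum_congr rfl fun i _ => tcl_integral_coord μ (θ i) (hθ i) p C (d i)
  rw [key q, key δ]
  have hn : (0:ℝ) ≤ 1 / (n:ℝ) := by positivity
  refine mul_le_mul_of_nonneg_left (Finset.sum_le_sum fun i _ => ?_) hn
  set F := (μ {ω | θ i ω ≤ C}).toReal with hF
  have hF0 : 0 ≤ F := tclF_nonneg μ (θ i) C
  have hF1 : F ≤ 1 := tclF_le_one μ (θ i) C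
  by_cases hqi : q i ≤ C
  · -- q i ≤ C, so F ≥ 1 - p
    have hFp : 1 - p ≤ F := tcl_quantile_le μ (θ i) (hθ i) hp0 hp1 (by rw [← hq i]; exact hqi)
    have hnq : ¬ C < q i := not_lt.mpr hqi
    simp only [hqi, hnq, if_true, if_false, zero_add]
    by_cases hdi : δ i ≤ C
    · simp only [hdi, not_lt.mpr hdi, if_true, if_false, zero_add, le_refl]
    · simp only [hdi, not_le.mp hdi, if_true, if_false, add_zero]
      nlinarith
  · -- q i > C, so F ≤ 1 - p
    have hqi' : C < q i := not_le.mp hqi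
    have hFp : F ≤ 1 - p := tcl_quantile_gt μ (θ i) (hθ i) hp0 hp1 (by rw [← hq i]; exact hqi')
    simp only [hqi, hqi', if_true, if_false, add_zero]
    by_cases hdi : δ i ≤ C
    · simp only [hdi, not_lt.mpr hdi, if_true, if_false, zero_add]
      nlinarith
    · simp only [hdi, not_le.mp hdi, if_true, if_false, add_zero, le_refl]
end

section
/- Posterior medians minimise the unweighted threshold classification loss: Let θ₁,…,θₙ be real random variables on a probability space and C ∈ ℝ a threshold. Let qᵢ = inf{x ∈ ℝ : P(θᵢ ≤ x) ≥ 1/2} be the posterior median of θᵢ. Then the vector of posterior medians q = (q₁,…,qₙ) minimises the expected unweighted threshold classification loss: for every δ ∈ ℝⁿ, E[TCL(C,θ,δ)] ≥ E[TCL(C,θ,q)], where TCL(C,θ,δ) = (1/n)Σᵢ[FP(C,θᵢ,δᵢ) + FN(C,θᵢ,δᵢ)]. -/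
open MeasureTheory Filter Topology

/-- The unweighted threshold classification loss
`TCL(C, θ, δ) = (1/n) Σᵢ [1{θᵢ ≤ C, δᵢ > C} + 1{θᵢ > C, δᵢ ≤ C}]`. -/
noncomputable def TCLu (n : ℕ) (C : ℝ) (θ δ : Fin n → ℝ) : ℝ :=
  (1 / (n : ℝ)) * ∑ i, ((if θ i ≤ C ∧ C < δ i then (1 : ℝ) else 0)
    + (if C < θ i ∧ δ i ≤ C then (1 : ℝ) else 0))

section Aux

variable {Ω : Type*} [MeasurableSpace Ω] (μ : Measure Ω) [IsProbabilityMeasure μ]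
  {θ : Ω → ℝ}

lemma cdf_mono (a b : ℝ) (hab : a ≤ b) :
    (μ {ω | θ ω ≤ a}).toReal ≤ (μ {ω | θ ω ≤ b}).toReal :=
  ENNReal.toReal_mono (measure_ne_top μ _)
    (measure_mono fun ω h => le_trans h hab)

lemma median_le_iff (hθ : Measurable θ) (C : ℝ) :
    sInf {x : ℝ | (1 : ℝ) / 2 ≤ (μ {ω | θ ω ≤ x}).toReal} ≤ C ↔
      (1 : ℝ) / 2 ≤ (μ {ω | θ ω ≤ C}).toReal := by
  set F : ℝ → ℝ := fun x => (μ {ω | θ ω ≤ x}).toReal with hFdef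
  have hmono : ∀ a b, a ≤ b → F a ≤ F b := cdf_mono μ
  -- the set is nonempty
  have hne : ∃ x, (1 : ℝ) / 2 ≤ F x := by
    have hU : (⋃ k : ℕ, {ω | θ ω ≤ (k : ℝ)}) = Set.univ := by
      ext ω
      simp only [Set.mem_iUnion, Set.mem_setOf_eq, Set.mem_univ, iff_true]
      exact exists_nat_ge (θ ω)
    have ht : Tendsto (fun k : ℕ => μ {ω | θ ω ≤ (k : ℝ)}) atTop (𝓝 1) := by
      have := tendsto_measure_iUnion_atTop (μ := μ)
        (s := fun k : ℕ => {ω | θ ω ≤ (k : ℝ)})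
        (fun a b hab => Set.setOf_subset_setOf.2 fun ω h => le_trans h (by exact_mod_cast hab))
      rwa [hU, measure_univ] at this
    have ht' : Tendsto (fun k : ℕ => F (k : ℝ)) atTop (𝓝 1) := by
      have := (ENNReal.tendsto_toReal (by simp : (1 : ENNReal) ≠ ⊤)).comp ht
      rw [ENNReal.toReal_one] at this
      exact this
    obtain ⟨k, hk⟩ := (ht'.eventually (eventually_ge_nhds (by norm_num : (1:ℝ)/2 < 1))).exists
    exact ⟨(k : ℝ), hk⟩
  -- the set is bounded below
  have hbdd : BddBelow {x : ℝ | (1 : ℝ) / 2 ≤ F x} := by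
    have hI : (⋂ k : ℕ, {ω | θ ω ≤ -(k : ℝ)}) = ∅ := by
      ext ω
      simp only [Set.mem_iInter, Set.mem_setOf_eq, Set.mem_empty_iff_false, iff_false, not_forall,
        not_le]
      obtain ⟨k, hk⟩ := exists_nat_gt (-θ ω)
      exact ⟨k, by linarith⟩
    have ht : Tendsto (fun k : ℕ => μ {ω | θ ω ≤ -(k : ℝ)}) atTop (𝓝 0) := by
      have := tendsto_measure_iInter_atTop (μ := μ)
        (s := fun k : ℕ => {ω | θ ω ≤ -(k : ℝ)})
        (fun k => (measurableSet_le hθ measurable_const).nullMeasurableSet)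
        (fun a b hab => Set.setOf_subset_setOf.2 fun ω h => le_trans h (by
          have : (a:ℝ) ≤ b := Nat.cast_le.2 hab
          linarith))
        ⟨0, measure_ne_top μ _⟩
      rwa [hI, measure_empty] at this
    have ht' : Tendsto (fun k : ℕ => F (-(k : ℝ))) atTop (𝓝 0) := by
      have := (ENNReal.tendsto_toReal (by simp : (0 : ENNReal) ≠ ⊤)).comp ht
      rw [ENNReal.toReal_zero] at this
      exact this
    obtain ⟨k, hk⟩ := (ht'.eventually (eventually_lt_nhds (by norm_num : (0:ℝ) < 1/2))).exists
    refine ⟨-(k : ℝ), fun s hs => ?_⟩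
    by_contra hcon
    push_neg at hcon
    exact absurd (le_trans hs (hmono _ _ hcon.le)) (not_le.2 hk)
  constructor
  · intro h
    have key : ∀ ε > (0 : ℝ), (1 : ℝ) / 2 ≤ F (C + ε) := by
      intro ε hε
      by_contra hc
      push_neg at hc
      have hle : C + ε ≤ sInf {x : ℝ | (1 : ℝ) / 2 ≤ F x} := by
        refine le_csInf hne fun s hs => ?_
        by_contra hs'
        push_neg at hs'
        exact absurd (le_trans hs (hmono _ _ hs'.le)) (not_le.2 hc)
      linarith
    have hiI : (⋂ k : ℕ, {ω | θ ω ≤ C + 1 / ((k : ℝ) + 1)}) = {ω | θ ω ≤ C} := by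
      ext ω
      simp only [Set.mem_iInter, Set.mem_setOf_eq]
      constructor
      · intro h'
        by_contra hC
        push_neg at hC
        obtain ⟨k, hk⟩ := exists_nat_one_div_lt (by linarith : (0:ℝ) < θ ω - C)
        have := h' k
        linarith
      · intro h' k
        have : (0:ℝ) < 1 / ((k : ℝ) + 1) := by positivity
        linarith
    have ht : Tendsto (fun k : ℕ => μ {ω | θ ω ≤ C + 1 / ((k : ℝ) + 1)}) atTop
        (𝓝 (μ {ω | θ ω ≤ C})) := by
      have := tendsto_measure_iInter_atTop (μ := μ)
        (s := fun k : ℕ => {ω | θ ω ≤ C + 1 / ((k : ℝ) + 1)})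
        (fun k => (measurableSet_le hθ measurable_const).nullMeasurableSet)
        (fun a b hab ω hω => by
          simp only [Set.mem_setOf_eq] at hω ⊢
          have hab' : (a:ℝ) ≤ b := Nat.cast_le.2 hab
          have : 1 / ((b : ℝ) + 1) ≤ 1 / ((a : ℝ) + 1) := by
            apply one_div_le_one_div_of_le (by positivity)
            linarith
          linarith)
        ⟨0, measure_ne_top μ _⟩
      rwa [hiI] at this
    have ht' : Tendsto (fun k : ℕ => F (C + 1 / ((k : ℝ) + 1))) atTop (𝓝 (F C)) :=
      (ENNReal.tendsto_toReal (measure_ne_top μ _)).comp ht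
    exact ge_of_tendsto ht' (Eventually.of_forall fun k => key _ (by positivity))
  · intro h
    exact csInf_le hbdd h

lemma integrable_loss (hθ : Measurable θ) (C b : ℝ) :
    Integrable (fun ω => (if θ ω ≤ C ∧ C < b then (1 : ℝ) else 0)
      + (if C < θ ω ∧ b ≤ C then (1 : ℝ) else 0)) μ := by
  apply Integrable.add
  · by_cases hb : C < b
    · simp only [hb, and_true]
      have : (fun ω => if θ ω ≤ C then (1:ℝ) else 0)
          = Set.indicator {ω | θ ω ≤ C} (fun _ => (1:ℝ)) := by
        funext ω; simp [Set.indicator_apply]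
      rw [this]
      exact (integrable_const (1:ℝ)).indicator (measurableSet_le hθ measurable_const)
    · simp only [hb, and_false, if_false]
      exact integrable_const 0
  · by_cases hb : b ≤ C
    · simp only [hb, and_true]
      have : (fun ω => if C < θ ω then (1:ℝ) else 0)
          = Set.indicator {ω | C < θ ω} (fun _ => (1:ℝ)) := by
        funext ω; simp [Set.indicator_apply]
      rw [this]
      exact (integrable_const (1:ℝ)).indicator (measurableSet_lt measurable_const hθ)
    · simp only [hb, and_false, if_false]
      exact integrable_const 0

lemma integral_loss (hθ : Measurable θ) (C b : ℝ) :
    ∫ ω, ((if θ ω ≤ C ∧ C < b then (1 : ℝ) else 0)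
      + (if C < θ ω ∧ b ≤ C then (1 : ℝ) else 0)) ∂μ
    = if C < b then (μ {ω | θ ω ≤ C}).toReal else 1 - (μ {ω | θ ω ≤ C}).toReal := by
  by_cases hb : C < b
  · simp only [hb, and_true, not_le.2 hb, and_false, if_false, add_zero, if_true]
    have h1 : (fun ω => if θ ω ≤ C then (1:ℝ) else 0)
        = Set.indicator {ω | θ ω ≤ C} (fun _ => (1:ℝ)) := by
      funext ω; simp [Set.indicator_apply]
    rw [h1, integral_indicator_const (1:ℝ) (measurableSet_le hθ measurable_const), smul_eq_mul, mul_one]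
    rfl
  · have hb' : b ≤ C := not_lt.1 hb
    simp only [hb, and_false, if_false, zero_add, hb', and_true]
    have h1 : (fun ω => if C < θ ω then (1:ℝ) else 0)
        = Set.indicator {ω | C < θ ω} (fun _ => (1:ℝ)) := by
      funext ω; simp [Set.indicator_apply]
    rw [h1, integral_indicator_const (1:ℝ) (measurableSet_lt measurable_const hθ),
      smul_eq_mul, mul_one]
    have hset : {ω | C < θ ω} = {ω | θ ω ≤ C}ᶜ := by
      ext ω; simp [not_le]
    rw [hset, Measure.real, measure_compl (measurableSet_le hθ measurable_const) (measure_ne_top μ _), measure_univ,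
      ENNReal.toReal_sub_of_le prob_le_one ENNReal.one_ne_top, ENNReal.toReal_one]

end Aux

/-- **Posterior medians minimise the unweighted threshold classification loss.** -/
theorem tcl_median_optimal
    {Ω : Type*} [MeasurableSpace Ω] (μ : Measure Ω) [IsProbabilityMeasure μ]
    {n : ℕ} (θ : Fin n → Ω → ℝ) (hθ : ∀ i, Measurable (θ i))
    (C : ℝ)
    (q : Fin n → ℝ)
    (hq : ∀ i, q i = sInf {x : ℝ | (1 : ℝ) / 2 ≤ (μ {ω | θ i ω ≤ x}).toReal}) :
    ∀ δ : Fin n → ℝ,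
      ∫ ω, TCLu n C (fun i => θ i ω) q ∂μ ≤
        ∫ ω, TCLu n C (fun i => θ i ω) δ ∂μ := by
  intro δ
  have hint : ∀ d : Fin n → ℝ,
      ∫ ω, TCLu n C (fun i => θ i ω) d ∂μ
        = (1 / (n : ℝ)) * ∑ i, (if C < d i then (μ {ω | θ i ω ≤ C}).toReal
            else 1 - (μ {ω | θ i ω ≤ C}).toReal) := by
    intro d
    simp only [TCLu]
    rw [integral_const_mul, integral_finset_sum _ (fun i _ => integrable_loss μ (hθ i) C (d i))]
    congr 1
    exact Finset.sum_congr rfl fun i _ => integral_loss μ (hθ i) C (d i)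
  rw [hint q, hint δ]
  apply mul_le_mul_of_nonneg_left _ (by positivity)
  apply Finset.sum_le_sum
  intro i _
  set p : ℝ := (μ {ω | θ i ω ≤ C}).toReal with hp
  have hp0 : 0 ≤ p := ENNReal.toReal_nonneg
  have hp1 : p ≤ 1 := by
    have := ENNReal.toReal_mono (by simp : (1 : ENNReal) ≠ ⊤) (prob_le_one (μ := μ) (s := {ω | θ i ω ≤ C}))
    simpa using this
  by_cases hqC : q i ≤ C
  · have hhalf : (1 : ℝ) / 2 ≤ p := (median_le_iff μ (hθ i) C).1 (by rw [← hq i]; exact hqC)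
    simp only [not_lt.2 hqC, if_false]
    split_ifs <;> linarith
  · have hhalf : p < 1 / 2 := by
      by_contra hcon
      push_neg at hcon
      exact hqC (by rw [hq i]; exact (median_le_iff μ (hθ i) C).2 hcon)
    simp only [not_le.1 hqC, if_true]
    split_ifs <;> linarith
end

section
/- Value of the minimal posterior weighted TCL risk: Let θ₁,…,θₙ be real random variables, C ∈ ℝ, p ∈ (0,1), Fᵢ(x) = P(θᵢ ≤ x), and qᵢ = inf{x : Fᵢ(x) ≥ 1−p}. Then the expected weighted threshold classification loss attained by the vector of posterior (1−p)-quantiles equals E[TCL_p(C,θ,q)] = (1/n)Σᵢ min{ p·Fᵢ(C), (1−p)·(1 − Fᵢ(C)) }. -/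
open MeasureTheory

/-- Quantile characterization for a CDF of a real probability measure. -/
lemma quantile_le_iff (ν : Measure ℝ) [IsProbabilityMeasure ν] {p C : ℝ}
    (hp0 : 0 < p) (hp1 : p < 1) :
    sInf {x : ℝ | 1 - p ≤ (ν (Set.Iic x)).toReal} ≤ C ↔
      1 - p ≤ (ν (Set.Iic C)).toReal := by
  have hG : ∀ x, (ν (Set.Iic x)).toReal = ProbabilityTheory.cdf ν x := by
    intro x; rw [ProbabilityTheory.cdf_eq_real]; rfl
  set f := ProbabilityTheory.cdf ν with hf
  have hA : {x : ℝ | 1 - p ≤ (ν (Set.Iic x)).toReal} = {x : ℝ | 1 - p ≤ f x} := by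
    ext x; simp [hG x]
  rw [hA, hG]
  -- bounded below
  have hbot : Filter.Tendsto f Filter.atBot (nhds 0) := ProbabilityTheory.tendsto_cdf_atBot ν
  obtain ⟨x0, hx0⟩ : ∃ x0, f x0 < 1 - p := by
    have := hbot.eventually (eventually_lt_nhds (by linarith : (0:ℝ) < 1 - p))
    obtain ⟨x0, hx0⟩ := this.exists
    exact ⟨x0, hx0⟩
  have hbdd : BddBelow {x : ℝ | 1 - p ≤ f x} := by
    refine ⟨x0, fun a ha => ?_⟩
    by_contra hcon
    push_neg at hcon
    exact absurd (le_trans ha (f.mono hcon.le)) (not_le.mpr hx0)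
  -- nonempty
  have htop : Filter.Tendsto f Filter.atTop (nhds 1) := ProbabilityTheory.tendsto_cdf_atTop ν
  obtain ⟨x1, hx1⟩ : ∃ x1, 1 - p < f x1 := by
    have := htop.eventually (eventually_gt_nhds (by linarith : 1 - p < 1))
    obtain ⟨x1, hx1⟩ := this.exists
    exact ⟨x1, hx1⟩
  have hne : {x : ℝ | 1 - p ≤ f x}.Nonempty := ⟨x1, hx1.le⟩
  constructor
  · intro h
    set m := sInf {x : ℝ | 1 - p ≤ f x} with hm
    have hmem : 1 - p ≤ f m := by
      have htend : Filter.Tendsto f (nhdsWithin m (Set.Ioi m)) (nhds (f m)) :=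
        ((f.right_continuous m).tendsto).mono_left
          (nhdsWithin_mono m Set.Ioi_subset_Ici_self)
      refine ge_of_tendsto htend ?_
      filter_upwards [self_mem_nhdsWithin] with x hx
      obtain ⟨a, ha, hax⟩ := Real.lt_sInf_add_pos hne (sub_pos.mpr hx)
      have : a ≤ x := by rw [← hm] at hax; linarith
      exact le_trans ha (f.mono this)
    exact le_trans hmem (f.mono h)
  · intro h
    exact csInf_le hbdd h

/-- Integral of an indicator-style `if`. -/
lemma integral_ite_mem {Ω : Type*} [MeasurableSpace Ω] (μ : Measure Ω) [IsProbabilityMeasure μ]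
    {s : Set Ω} (hs : MeasurableSet s) :
    ∫ ω, s.indicator (fun _ => (1 : ℝ)) ω ∂μ = (μ s).toReal := by
  rw [integral_indicator_const (1 : ℝ) hs, smul_eq_mul, mul_one]
  rfl

/-- **Value of the minimal posterior weighted TCL risk.** The expected weighted threshold
classification loss of the vector of posterior `(1−p)`-quantiles equals
`(1/n) Σᵢ min(p Fᵢ(C), (1−p)(1 − Fᵢ(C)))`. -/
theorem tcl_weighted_minimal_risk_value
    {Ω : Type*} [MeasurableSpace Ω] (μ : Measure Ω) [IsProbabilityMeasure μ]
    {n : ℕ} (θ : Fin n → Ω → ℝ) (hθ : ∀ i, Measurable (θ i))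
    (C p : ℝ) (hp : p ∈ Set.Ioo (0 : ℝ) 1)
    (F : Fin n → ℝ → ℝ) (hF : ∀ i x, F i x = (μ {ω | θ i ω ≤ x}).toReal)
    (q : Fin n → ℝ) (hq : ∀ i, q i = sInf {x : ℝ | 1 - p ≤ F i x}) :
    ∫ ω, TCLw n p C (fun i => θ i ω) q ∂μ =
      (1 / (n : ℝ)) * ∑ i, min (p * F i C) ((1 - p) * (1 - F i C)) := by
  obtain ⟨hp0, hp1⟩ := hp
  -- measurable sets
  have hSle : ∀ (i : Fin n) (x : ℝ), MeasurableSet {ω | θ i ω ≤ x} := fun i x =>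
    (hθ i) measurableSet_Iic
  have hSgt : ∀ i : Fin n, MeasurableSet {ω | C < θ i ω} := fun i =>
    (hθ i) measurableSet_Ioi
  -- key: q i ≤ C ↔ 1 - p ≤ F i C
  have hkey : ∀ i : Fin n, q i ≤ C ↔ 1 - p ≤ F i C := by
    intro i
    set ν := μ.map (θ i) with hν
    have : IsProbabilityMeasure ν := Measure.isProbabilityMeasure_map (hθ i).aemeasurable
    have hFν : ∀ x, F i x = (ν (Set.Iic x)).toReal := by
      intro x
      rw [hF, hν, Measure.map_apply (hθ i) measurableSet_Iic]
      rfl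
    rw [hq i, hFν C]
    have : {x : ℝ | 1 - p ≤ F i x} = {x : ℝ | 1 - p ≤ (ν (Set.Iic x)).toReal} := by
      ext x; simp [hFν x]
    rw [this]
    exact quantile_le_iff ν hp0 hp1
  -- F i C ∈ [0,1]
  have hF01 : ∀ i : Fin n, 0 ≤ F i C ∧ F i C ≤ 1 := by
    intro i
    rw [hF]
    constructor
    · exact ENNReal.toReal_nonneg
    · have h1 : μ {ω | θ i ω ≤ C} ≤ 1 := prob_le_one
      simpa using ENNReal.toReal_mono ENNReal.one_ne_top h1
  -- per-i integral value
  have hterm : ∀ i : Fin n,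
      (∫ ω, (p * (if θ i ω ≤ C ∧ C < q i then (1 : ℝ) else 0)
        + (1 - p) * (if C < θ i ω ∧ q i ≤ C then (1 : ℝ) else 0)) ∂μ)
      = min (p * F i C) ((1 - p) * (1 - F i C)) := by
    intro i
    by_cases h : q i ≤ C
    · have h' : ¬ C < q i := not_lt.mpr h
      have heq : (fun ω => p * (if θ i ω ≤ C ∧ C < q i then (1 : ℝ) else 0)
          + (1 - p) * (if C < θ i ω ∧ q i ≤ C then (1 : ℝ) else 0))
          = fun ω => (1 - p) * ({ω | C < θ i ω}.indicator (fun _ => (1:ℝ)) ω) := by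
        ext ω; simp [h, h', Set.indicator_apply]
      rw [heq, integral_const_mul, integral_ite_mem μ (hSgt i)]
      have hcompl : μ {ω | C < θ i ω} = 1 - μ {ω | θ i ω ≤ C} := by
        have : {ω | C < θ i ω} = {ω | θ i ω ≤ C}ᶜ := by ext ω; simp
        rw [this, measure_compl (hSle i C) (measure_ne_top μ _), measure_univ]
      have htoReal : (μ {ω | C < θ i ω}).toReal = 1 - F i C := by
        rw [hcompl, hF, ENNReal.toReal_sub_of_le prob_le_one (by simp)]
        simp
      rw [htoReal]
      have hFC : 1 - p ≤ F i C := (hkey i).mp h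
      have : (1 - p) * (1 - F i C) ≤ p * F i C := by nlinarith [(hF01 i).1, (hF01 i).2]
      rw [min_eq_right this]
    · have h' : C < q i := not_le.mp h
      have heq : (fun ω => p * (if θ i ω ≤ C ∧ C < q i then (1 : ℝ) else 0)
          + (1 - p) * (if C < θ i ω ∧ q i ≤ C then (1 : ℝ) else 0))
          = fun ω => p * ({ω | θ i ω ≤ C}.indicator (fun _ => (1:ℝ)) ω) := by
        ext ω; simp [h, h', Set.indicator_apply]
      rw [heq, integral_const_mul, integral_ite_mem μ (hSle i C), ← hF]
      have hFC : F i C < 1 - p := by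
        by_contra hcon
        push_neg at hcon
        exact h ((hkey i).mpr hcon)
      have : p * F i C ≤ (1 - p) * (1 - F i C) := by nlinarith [(hF01 i).1]
      rw [min_eq_left this]
  -- integrability
  have hint : ∀ i : Fin n, Integrable (fun ω =>
      p * (if θ i ω ≤ C ∧ C < q i then (1 : ℝ) else 0)
        + (1 - p) * (if C < θ i ω ∧ q i ≤ C then (1 : ℝ) else 0)) μ := by
    intro i
    by_cases h : q i ≤ C
    · have h' : ¬ C < q i := not_lt.mpr h
      have heq : (fun ω => p * (if θ i ω ≤ C ∧ C < q i then (1 : ℝ) else 0)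
          + (1 - p) * (if C < θ i ω ∧ q i ≤ C then (1 : ℝ) else 0))
          = fun ω => (1 - p) * ({ω | C < θ i ω}.indicator (fun _ => (1:ℝ)) ω) := by
        ext ω; simp [h, h', Set.indicator_apply]
      rw [heq]
      exact ((integrable_const (1:ℝ)).indicator (hSgt i)).const_mul _
    · have h' : C < q i := not_le.mp h
      have heq : (fun ω => p * (if θ i ω ≤ C ∧ C < q i then (1 : ℝ) else 0)
          + (1 - p) * (if C < θ i ω ∧ q i ≤ C then (1 : ℝ) else 0))
          = fun ω => p * ({ω | θ i ω ≤ C}.indicator (fun _ => (1:ℝ)) ω) := by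
        ext ω; simp [h, h', Set.indicator_apply]
      rw [heq]
      exact ((integrable_const (1:ℝ)).indicator (hSle i C)).const_mul _
  unfold TCLw
  rw [integral_const_mul, integral_finset_sum _ (fun i _ => hint i)]
  congr 1
  exact Finset.sum_congr rfl (fun i _ => hterm i)
end

section
/- Optimality of ranked posterior exceedance probabilities under rank classification loss (Lin et al.): Let θ = (θ₁,…,θₙ) be a random vector in ℝⁿ on a probability space with P(θᵢ = θⱼ) = 0 for all i ≠ j, and let γ ∈ [0,1] be such that γ ≠ k/(n+1) for every integer k with 1 ≤ k ≤ n. For each i let πᵢ = P(Pᵢ(θ) ≥ γ), assume the πᵢ are pairwise distinct, and define the estimated percentile ranks P̂ᵢ = Rᵢ(π)/(n+1), where Rᵢ(π) = Σⱼ1{πᵢ ≥ πⱼ}. Then P̂ minimises the expected rank classification loss among all percentile-rank vectors: for every permutation σ of {1,…,n}, with δ_σ defined by (δ_σ)ᵢ = σ(i)/(n+1), one has E[RCL(γ,θ,P̂)] ≤ E[RCL(γ,θ,δ_σ)]. -/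
open MeasureTheory

/-- The rank of the `i`-th component of `x`: `Rᵢ(x) = Σⱼ 1{xᵢ ≥ xⱼ}`. -/
noncomputable def rankOf {n : ℕ} (x : Fin n → ℝ) (i : Fin n) : ℕ :=
  (Finset.univ.filter fun j => x j ≤ x i).card

/-- The percentile rank of the `i`-th component: `Pᵢ(x) = Rᵢ(x)/(n+1)`. -/
noncomputable def percOf {n : ℕ} (x : Fin n → ℝ) (i : Fin n) : ℝ :=
  (rankOf x i : ℝ) / ((n : ℝ) + 1)

/-- The rank classification loss
`RCL(γ, x, δ) = (1/n) Σᵢ [1{Pᵢ(x) ≤ γ, δᵢ > γ} + 1{Pᵢ(x) > γ, δᵢ ≤ γ}]`. -/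
noncomputable def RCL (n : ℕ) (γ : ℝ) (x δ : Fin n → ℝ) : ℝ :=
  (1 / (n : ℝ)) * ∑ i, ((if percOf x i ≤ γ ∧ γ < δ i then (1 : ℝ) else 0)
    + (if γ < percOf x i ∧ δ i ≤ γ then (1 : ℝ) else 0))

section RclAux

variable {Ω : Type*} [MeasurableSpace Ω]

lemma rclAux_integral_ite (μ : Measure Ω) (p : Ω → Prop) [DecidablePred p]
    (hs : MeasurableSet {ω | p ω}) :
    ∫ ω, (if p ω then (1:ℝ) else 0) ∂μ = (μ {ω | p ω}).toReal := by
  have h : (fun ω => if p ω then (1:ℝ) else 0) = ({ω | p ω}).indicator 1 := by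
    ext ω
    by_cases hω : p ω <;> simp [hω, Set.indicator_apply]
  rw [h, integral_indicator_one hs]
  rfl

lemma rclAux_integrable_ite (μ : Measure Ω) [IsFiniteMeasure μ] (p : Ω → Prop)
    [DecidablePred p] (hs : MeasurableSet {ω | p ω}) :
    Integrable (fun ω => if p ω then (1:ℝ) else 0) μ := by
  have h : (fun ω => if p ω then (1:ℝ) else 0) = ({ω | p ω}).indicator (fun _ => (1:ℝ)) := by
    ext ω
    by_cases hω : p ω <;> simp [hω, Set.indicator_apply]
  rw [h]
  exact (integrable_const (1:ℝ)).indicator hs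

lemma rclAux_sum_le {n : ℕ} (π : Fin n → ℝ) (S T : Finset (Fin n))
    (hc : S.card = T.card)
    (h : ∀ i ∈ S, ∀ j, j ∉ S → π i ≤ π j) :
    ∑ i ∈ S, π i ≤ ∑ i ∈ T, π i := by
  classical
  have hS := Finset.sum_inter_add_sum_sdiff S T π
  have hT := Finset.sum_inter_add_sum_sdiff T S π
  have hint : S ∩ T = T ∩ S := Finset.inter_comm S T
  have hcd : (S \ T).card = (T \ S).card := by
    have h1 := Finset.card_sdiff_add_card_inter S T
    have h2 := Finset.card_sdiff_add_card_inter T S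
    rw [hint] at h1
    omega
  have key : ∑ i ∈ S \ T, π i ≤ ∑ i ∈ T \ S, π i := by
    rcases (S \ T).eq_empty_or_nonempty with hA | hA
    · have hB : T \ S = ∅ := by
        rw [hA] at hcd; exact Finset.card_eq_zero.mp hcd.symm
      simp [hA, hB]
    · have hB : (T \ S).Nonempty := by
        rw [← Finset.card_pos, ← hcd, Finset.card_pos]; exact hA
      set a := (T \ S).inf' hB π with ha
      have h1 : ∑ i ∈ S \ T, π i ≤ (S \ T).card • a := by
        apply Finset.sum_le_card_nsmul
        intro x hx
        apply Finset.le_inf' hB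
        intro b hb
        exact h x (Finset.mem_sdiff.mp hx).1 b (Finset.mem_sdiff.mp hb).2
      have h2 : (T \ S).card • a ≤ ∑ i ∈ T \ S, π i :=
        Finset.card_nsmul_le_sum _ _ _ (fun x hx => Finset.inf'_le π hx)
      rw [hcd] at h1
      linarith
  linarith [hS, hT, hint ▸ hS]

lemma rclAux_card_bij {n : ℕ} (e : Fin n → Fin n) (he : Function.Bijective e)
    (p : Fin n → Prop) [DecidablePred p] :
    (Finset.univ.filter fun i => p (e i)).card = (Finset.univ.filter p).card := by
  apply Finset.card_nbij e
  · intro a ha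
    simp only [Finset.mem_coe, Finset.mem_filter, Finset.mem_univ, true_and] at ha ⊢
    exact ha
  · exact he.1.injOn
  · intro b hb
    simp only [Finset.coe_filter, Finset.mem_univ, true_and, Set.mem_setOf_eq] at hb
    obtain ⟨a, ha⟩ := he.2 b
    exact ⟨a, by simp [ha, hb], ha⟩

end RclAux

/-- **Optimality of ranked posterior exceedance probabilities under rank classification
loss (Lin et al., 2006).** The percentile ranks of the posterior probabilities
`πᵢ = P(Pᵢ(θ) ≥ γ)` minimise the expected rank classification loss among all
percentile-rank vectors. -/
theorem rcl_optimal
    {Ω : Type*} [MeasurableSpace Ω] (μ : Measure Ω) [IsProbabilityMeasure μ]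
    {n : ℕ} (θ : Fin n → Ω → ℝ) (hθ : ∀ i, Measurable (θ i))
    (hdistinct : ∀ i j, i ≠ j → μ {ω | θ i ω = θ j ω} = 0)
    (γ : ℝ) (hγ : γ ∈ Set.Icc (0 : ℝ) 1)
    (hγk : ∀ k : ℕ, 1 ≤ k → k ≤ n → γ ≠ (k : ℝ) / ((n : ℝ) + 1))
    (π : Fin n → ℝ)
    (hπ : ∀ i, π i = (μ {ω | γ ≤ percOf (fun j => θ j ω) i}).toReal)
    (hπd : Function.Injective π)
    (Phat : Fin n → ℝ)
    (hPhat : ∀ i, Phat i =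
      ((Finset.univ.filter fun j => π j ≤ π i).card : ℝ) / ((n : ℝ) + 1)) :
    ∀ σ : Equiv.Perm (Fin n),
      ∫ ω, RCL n γ (fun j => θ j ω) Phat ∂μ ≤
        ∫ ω, RCL n γ (fun j => θ j ω)
          (fun i => (((σ i : Fin n) : ℕ) + 1 : ℝ) / ((n : ℝ) + 1)) ∂μ := by
  classical
  intro σ
  -- measurability of percentile processes
  have hrank : ∀ i : Fin n, Measurable (fun ω => (rankOf (fun j => θ j ω) i : ℝ)) := by
    intro i
    have heq : (fun ω => (rankOf (fun j => θ j ω) i : ℝ))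
        = fun ω => ∑ j, (if θ j ω ≤ θ i ω then (1:ℝ) else 0) := by
      ext ω
      rw [rankOf, Finset.card_filter]
      push_cast
      rfl
    rw [heq]
    exact Finset.measurable_sum _ (fun j _ =>
      Measurable.ite (measurableSet_le (hθ j) (hθ i)) measurable_const measurable_const)
  have hPmeas : ∀ i : Fin n, Measurable (fun ω => percOf (fun j => θ j ω) i) :=
    fun i => (hrank i).div_const _
  have hC_meas : ∀ i : Fin n, MeasurableSet {ω | γ < percOf (fun j => θ j ω) i} :=
    fun i => measurableSet_lt measurable_const (hPmeas i)
  have hB_meas : ∀ i : Fin n, MeasurableSet {ω | percOf (fun j => θ j ω) i ≤ γ} :=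
    fun i => measurableSet_le (hPmeas i) measurable_const
  -- the percentile never equals γ
  have hne : ∀ (i : Fin n) (ω : Ω), percOf (fun j => θ j ω) i ≠ γ := by
    intro i ω h
    have h1 : 1 ≤ rankOf (fun j => θ j ω) i :=
      Finset.card_pos.mpr ⟨i, Finset.mem_filter.mpr ⟨Finset.mem_univ i, le_refl _⟩⟩
    have h2 : rankOf (fun j => θ j ω) i ≤ n :=
      (Finset.card_filter_le _ _).trans (by simp)
    exact hγk _ h1 h2 h.symm
  have hCset : ∀ i : Fin n, {ω | γ < percOf (fun j => θ j ω) i}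
      = {ω | γ ≤ percOf (fun j => θ j ω) i} := by
    intro i
    ext ω
    simp only [Set.mem_setOf_eq]
    exact ⟨le_of_lt, fun h => lt_of_le_of_ne h (hne i ω).symm⟩
  have hπC : ∀ i : Fin n, (μ {ω | γ < percOf (fun j => θ j ω) i}).toReal = π i := by
    intro i
    rw [hCset i]
    exact (hπ i).symm
  have hπB : ∀ i : Fin n, (μ {ω | percOf (fun j => θ j ω) i ≤ γ}).toReal = 1 - π i := by
    intro i
    have hcompl : {ω | percOf (fun j => θ j ω) i ≤ γ}
        = {ω | γ < percOf (fun j => θ j ω) i}ᶜ := by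
      ext ω; simp [not_lt]
    rw [hcompl, prob_compl_eq_one_sub (hC_meas i),
      ENNReal.toReal_sub_of_le prob_le_one ENNReal.one_ne_top, ENNReal.toReal_one, hπC i]
  -- expected loss formula
  have hint : ∀ δ : Fin n → ℝ, ∫ ω, RCL n γ (fun j => θ j ω) δ ∂μ
      = (1 / (n:ℝ)) * ∑ i, (if δ i ≤ γ then π i else 1 - π i) := by
    intro δ
    unfold RCL
    rw [integral_const_mul]
    congr 1
    rw [integral_finset_sum]
    · apply Finset.sum_congr rfl
      intro i _
      by_cases h : δ i ≤ γ
      · have h1 : ∀ ω : Ω, (if percOf (fun j => θ j ω) i ≤ γ ∧ γ < δ i then (1:ℝ) else 0) = 0 :=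
          fun ω => if_neg (fun hc => absurd hc.2 (not_lt.mpr h))
        have h2 : ∀ ω : Ω, (if γ < percOf (fun j => θ j ω) i ∧ δ i ≤ γ then (1:ℝ) else 0)
            = (if γ < percOf (fun j => θ j ω) i then (1:ℝ) else 0) := by
          intro ω
          by_cases hp : γ < percOf (fun j => θ j ω) i <;> simp [hp, h]
        simp only [h1, h2, zero_add]
        rw [rclAux_integral_ite μ _ (hC_meas i), hπC i, if_pos h]
      · have h1 : ∀ ω : Ω, (if percOf (fun j => θ j ω) i ≤ γ ∧ γ < δ i then (1:ℝ) else 0)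
            = (if percOf (fun j => θ j ω) i ≤ γ then (1:ℝ) else 0) := by
          intro ω
          by_cases hp : percOf (fun j => θ j ω) i ≤ γ <;> simp [hp, not_le.mp h]
        have h2 : ∀ ω : Ω, (if γ < percOf (fun j => θ j ω) i ∧ δ i ≤ γ then (1:ℝ) else 0) = 0 :=
          fun ω => if_neg (fun hc => absurd hc.2 h)
        simp only [h1, h2, add_zero]
        rw [rclAux_integral_ite μ _ (hB_meas i), hπB i, if_neg h]
    · intro i _
      apply Integrable.add
      · exact rclAux_integrable_ite μ _
          ((hB_meas i).inter (MeasurableSet.const _))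
      · exact rclAux_integrable_ite μ _
          ((hC_meas i).inter (MeasurableSet.const _))
  -- rank function of π
  set r : Fin n → ℕ := fun i => (Finset.univ.filter fun j => π j ≤ π i).card with hrdef
  have hPr : ∀ i, Phat i = ((r i : ℕ) : ℝ) / ((n:ℝ) + 1) := hPhat
  have hr1 : ∀ i, 1 ≤ r i := fun i =>
    Finset.card_pos.mpr ⟨i, Finset.mem_filter.mpr ⟨Finset.mem_univ i, le_refl _⟩⟩
  have hrn : ∀ i, r i ≤ n := fun i => (Finset.card_filter_le _ _).trans (by simp)
  have hmono : ∀ i j, π i ≤ π j → r i ≤ r j := by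
    intro i j hij
    apply Finset.card_le_card
    intro k hk
    rw [Finset.mem_filter] at hk ⊢
    exact ⟨hk.1, hk.2.trans hij⟩
  have hstrict : ∀ i j, π i < π j → r i < r j := by
    intro i j hij
    apply Finset.card_lt_card
    have hsub : (Finset.univ.filter fun k => π k ≤ π i)
        ⊆ (Finset.univ.filter fun k => π k ≤ π j) := by
      intro k hk
      rw [Finset.mem_filter] at hk ⊢
      exact ⟨hk.1, hk.2.trans hij.le⟩
    refine (Finset.ssubset_iff_of_subset hsub).mpr ⟨j, ?_, ?_⟩
    · exact Finset.mem_filter.mpr ⟨Finset.mem_univ j, le_refl _⟩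
    · intro hj
      exact absurd (Finset.mem_filter.mp hj).2 (not_le.mpr hij)
  have hlt : ∀ i j, r i < r j → π i < π j := by
    intro i j hij
    by_contra hle
    push_neg at hle
    rcases eq_or_lt_of_le hle with heq | hlt'
    · have hji : j = i := hπd heq
      rw [hji] at hij
      exact lt_irrefl _ hij
    · exact absurd (hstrict j i hlt') (by omega)
  -- the associated bijection of Fin n
  have hρpos : ∀ i, r i - 1 < n := by intro i; have := hr1 i; have := hrn i; omega
  set ρ : Fin n → Fin n := fun i => ⟨r i - 1, hρpos i⟩ with hρdef
  have hρr : ∀ i, ((r i : ℕ) : ℝ) = ((ρ i : ℕ) : ℝ) + 1 := by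
    intro i
    have h1 : ((ρ i : ℕ)) + 1 = r i := by simp [hρdef]; have := hr1 i; omega
    rw [← h1]; push_cast; ring
  have hρinj : Function.Injective ρ := by
    intro i j hij
    have : r i - 1 = r j - 1 := congrArg Fin.val hij
    have hr : r i = r j := by have := hr1 i; have := hr1 j; omega
    by_contra hne'
    rcases lt_or_gt_of_ne (fun h : π i = π j => hne' (hπd h)) with h | h
    · exact absurd hr (Nat.ne_of_lt (hstrict _ _ h))
    · exact absurd hr.symm (Nat.ne_of_lt (hstrict _ _ h))
  have hρbij : Function.Bijective ρ := Finite.injective_iff_bijective.mp hρinj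
  -- the two selection sets
  set Sp := Finset.univ.filter (fun i => Phat i ≤ γ) with hSpdef
  set Ss := Finset.univ.filter
    (fun i => (((σ i : Fin n) : ℕ) + 1 : ℝ) / ((n : ℝ) + 1) ≤ γ) with hSsdef
  have hSp_eq : Sp = Finset.univ.filter
      (fun i => (((ρ i : Fin n) : ℕ) + 1 : ℝ) / ((n : ℝ) + 1) ≤ γ) := by
    apply Finset.filter_congr
    intro i _
    rw [hPr i, hρr i]
  have hcard : Sp.card = Ss.card := by
    rw [hSp_eq, hSsdef,
      rclAux_card_bij ρ hρbij (fun k => (((k : Fin n) : ℕ) + 1 : ℝ) / ((n : ℝ) + 1) ≤ γ),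
      rclAux_card_bij σ σ.bijective (fun k => (((k : Fin n) : ℕ) + 1 : ℝ) / ((n : ℝ) + 1) ≤ γ)]
  have horder : ∀ i ∈ Sp, ∀ j, j ∉ Sp → π i ≤ π j := by
    intro i hi j hj
    rw [hSpdef, Finset.mem_filter] at hi hj
    have hi' : Phat i ≤ γ := hi.2
    have hj' : γ < Phat j := by
      rcases not_and_or.mp hj with h | h
      · exact absurd (Finset.mem_univ j) h
      · exact not_le.mp h
    have hrr : (r i : ℝ) < (r j : ℝ) := by
      rw [hPr i] at hi'
      rw [hPr j] at hj'
      have hc : (0:ℝ) < (n:ℝ) + 1 := by positivity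
      rw [div_le_iff₀ hc] at hi'
      rw [lt_div_iff₀ hc] at hj'
      linarith
    have : r i < r j := by exact_mod_cast hrr
    exact (hlt i j this).le
  have hsum : ∑ i ∈ Sp, π i ≤ ∑ i ∈ Ss, π i := rclAux_sum_le π Sp Ss hcard horder
  -- conclude
  rw [hint Phat, hint (fun i => (((σ i : Fin n) : ℕ) + 1 : ℝ) / ((n : ℝ) + 1))]
  have hnn : (0:ℝ) ≤ 1 / (n:ℝ) := by positivity
  apply mul_le_mul_of_nonneg_left _ hnn
  have hsplit : ∀ δ : Fin n → ℝ, ∑ i, (if δ i ≤ γ then π i else 1 - π i)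
      = (∑ i, (1 - π i)) + (2 * ∑ i ∈ Finset.univ.filter (fun i => δ i ≤ γ), π i
        - ((Finset.univ.filter (fun i => δ i ≤ γ)).card : ℝ)) := by
    intro δ
    have hterm : ∀ i : Fin n, (if δ i ≤ γ then π i else 1 - π i)
        = (1 - π i) + (if δ i ≤ γ then 2 * π i - 1 else 0) := by
      intro i; split_ifs <;> ring
    rw [Finset.sum_congr rfl (fun i _ => hterm i), Finset.sum_add_distrib]
    congr 1
    rw [← Finset.sum_filter, Finset.sum_sub_distrib, Finset.sum_const, nsmul_eq_mul,
      mul_one, Finset.mul_sum]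
  rw [hsplit Phat, hsplit (fun i => (((σ i : Fin n) : ℕ) + 1 : ℝ) / ((n : ℝ) + 1))]
  have hcardR : ((Sp.card : ℕ) : ℝ) = ((Ss.card : ℕ) : ℝ) := by exact_mod_cast hcard
  rw [hSpdef] at hsum hcardR
  rw [hSsdef] at hsum hcardR
  linarith
end

section
/- Posterior expected RCL in terms of the rank-based false negative rate: Let θ = (θ₁,…,θₙ) be a random vector in ℝⁿ with P(θᵢ = θⱼ) = 0 for i ≠ j, let γ ∈ [0,1], let δ be a percentile-rank vector (δᵢ = τ(i)/(n+1) for a permutation τ), and assume ΣᵢP(Pᵢ(θ) > γ) > 0. Define the posterior true positive rate TPR(γ,θ,δ) = [Σᵢ1{δᵢ > γ}·P(Pᵢ(θ) > γ)]/[ΣᵢP(Pᵢ(θ) > γ)]. Then E[RCL(γ,θ,δ)] = (2/n)·(1 − TPR(γ,θ,δ))·ΣᵢP(Pᵢ(θ) > γ). -/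
open MeasureTheory

lemma rank_lt_rank {n : ℕ} {x : Fin n → ℝ} {i j : Fin n} (h : x i < x j) :
    rankOf x i < rankOf x j := by
  apply Finset.card_lt_card
  rw [Finset.ssubset_iff_of_subset]
  · exact ⟨j, Finset.mem_filter.mpr ⟨Finset.mem_univ j, le_rfl⟩,
      fun hj => absurd (Finset.mem_filter.mp hj).2 (not_le.mpr h)⟩
  · exact Finset.monotone_filter_right _ (fun k _ hk => le_trans hk h.le)

lemma rank_inj {n : ℕ} {x : Fin n → ℝ} (hx : Function.Injective x) :
    Function.Injective (rankOf x) := by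
  intro i j h
  by_contra hne
  have hxne : x i ≠ x j := fun e => hne (hx e)
  rcases hxne.lt_or_gt with hl | hl
  · exact absurd h (rank_lt_rank hl).ne
  · exact absurd h.symm (rank_lt_rank hl).ne

lemma rank_mem_Icc {n : ℕ} (x : Fin n → ℝ) (i : Fin n) : rankOf x i ∈ Finset.Icc 1 n := by
  rw [Finset.mem_Icc]
  refine ⟨Finset.card_pos.mpr ⟨i, Finset.mem_filter.mpr ⟨Finset.mem_univ i, le_rfl⟩⟩, ?_⟩
  exact le_trans (Finset.card_filter_le _ _) (by simp)

lemma sum_ite_inj {n : ℕ} (P : ℕ → Prop) [DecidablePred P] (f : Fin n → ℕ)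
    (hf : Function.Injective f) (hmem : ∀ i, f i ∈ Finset.Icc 1 n) :
    ∑ i, (if P (f i) then (1:ℝ) else 0) = ∑ k ∈ Finset.Icc 1 n, (if P k then (1:ℝ) else 0) := by
  have himg : Finset.univ.image f = Finset.Icc 1 n := by
    apply Finset.eq_of_subset_of_card_le
    · intro k hk
      rcases Finset.mem_image.mp hk with ⟨i, _, rfl⟩
      exact hmem i
    · rw [Finset.card_image_of_injective _ hf]; simp
  rw [← himg, Finset.sum_image (fun x _ y _ h => hf h)]

lemma integral_ite_mem_s14 {Ω : Type*} [MeasurableSpace Ω] (μ : Measure Ω) [IsProbabilityMeasure μ]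
    {p : Ω → Prop} [DecidablePred p] (hs : MeasurableSet {ω | p ω}) :
    ∫ ω, (if p ω then (1:ℝ) else 0) ∂μ = (μ {ω | p ω}).toReal := by
  have h : (fun ω => if p ω then (1:ℝ) else 0) = Set.indicator {ω | p ω} (fun _ => 1) := by
    ext ω
    by_cases hp : p ω <;> simp [Set.indicator, hp]
  rw [h, integral_indicator hs]
  simp
  rfl

lemma integrable_ite_mem {Ω : Type*} [MeasurableSpace Ω] (μ : Measure Ω) [IsProbabilityMeasure μ]
    {p : Ω → Prop} [DecidablePred p] (hs : MeasurableSet {ω | p ω}) :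
    Integrable (fun ω => if p ω then (1:ℝ) else 0) μ := by
  have h : (fun ω => if p ω then (1:ℝ) else 0) = Set.indicator {ω | p ω} (fun _ => 1) := by
    ext ω
    by_cases hp : p ω <;> simp [Set.indicator, hp]
  rw [h]
  exact (integrable_const (1:ℝ)).indicator hs

/-- **Posterior expected RCL in terms of the rank-based false negative rate.** For a
percentile-rank decision vector `δ`,
`E[RCL(γ,θ,δ)] = (2/n)(1 − TPR(γ,θ,δ)) Σᵢ P(Pᵢ(θ) > γ)`. -/
theorem rcl_fnr_decomposition
    {Ω : Type*} [MeasurableSpace Ω] (μ : Measure Ω) [IsProbabilityMeasure μ]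
    {n : ℕ} (θ : Fin n → Ω → ℝ) (hθ : ∀ i, Measurable (θ i))
    (hdistinct : ∀ i j, i ≠ j → μ {ω | θ i ω = θ j ω} = 0)
    (γ : ℝ) (hγ : γ ∈ Set.Icc (0 : ℝ) 1)
    (τ : Equiv.Perm (Fin n)) (δ : Fin n → ℝ)
    (hδ : ∀ i, δ i = (((τ i : Fin n) : ℕ) + 1 : ℝ) / ((n : ℝ) + 1))
    (hpos : 0 < ∑ i, (μ {ω | γ < percOf (fun j => θ j ω) i}).toReal)
    (TPR : ℝ)
    (hTPR : TPR =
      (∑ i, (if γ < δ i then (1 : ℝ) else 0) *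
        (μ {ω | γ < percOf (fun j => θ j ω) i}).toReal) /
      ∑ i, (μ {ω | γ < percOf (fun j => θ j ω) i}).toReal) :
    ∫ ω, RCL n γ (fun j => θ j ω) δ ∂μ =
      (2 / (n : ℝ)) * (1 - TPR) *
        ∑ i, (μ {ω | γ < percOf (fun j => θ j ω) i}).toReal := by
  classical
  set A : Fin n → Set Ω := fun i => {ω | γ < percOf (fun j => θ j ω) i} with hAdef
  -- measurability
  have hrank_meas : ∀ i, Measurable fun ω => (rankOf (fun j => θ j ω) i : ℝ) := by
    intro i
    have h : (fun ω => (rankOf (fun j => θ j ω) i : ℝ))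
        = fun ω => ∑ j, (if θ j ω ≤ θ i ω then (1:ℝ) else 0) := by
      funext ω
      rw [rankOf, Finset.card_filter]
      push_cast
      rfl
    rw [h]
    exact Finset.measurable_sum _ fun j _ =>
      Measurable.ite (measurableSet_le (hθ j) (hθ i)) measurable_const measurable_const
  have hperc_meas : ∀ i, Measurable fun ω => percOf (fun j => θ j ω) i := by
    intro i
    unfold percOf
    exact (hrank_meas i).div_const _
  have hA : ∀ i, MeasurableSet (A i) := fun i =>
    measurableSet_lt measurable_const (hperc_meas i)
  -- a.e. injectivity
  have hae : ∀ᵐ ω ∂μ, Function.Injective (fun j => θ j ω) := by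
    have h1 : ∀ᵐ ω ∂μ, ∀ i j, i ≠ j → θ i ω ≠ θ j ω := by
      rw [ae_all_iff]
      intro i
      rw [ae_all_iff]
      intro j
      by_cases hij : i = j
      · filter_upwards with ω h
        exact absurd hij h
      · rw [ae_iff]
        have he : {ω | ¬ (i ≠ j → θ i ω ≠ θ j ω)} = {ω | θ i ω = θ j ω} := by
          ext ω; simp [hij]
        rw [he]
        exact hdistinct i j hij
    filter_upwards [h1] with ω h a b hab
    by_contra hne
    exact h a b hne hab
  -- the key counting identity, a.e.
  set P : ℕ → Prop := fun k => γ < (k:ℝ) / ((n:ℝ) + 1) with hPdef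
  have hcount : ∀ᵐ ω ∂μ, ∑ i, (if γ < δ i then (1:ℝ) else 0)
      = ∑ i, (if ω ∈ A i then (1:ℝ) else 0) := by
    filter_upwards [hae] with ω hω
    have e1 : ∑ i, (if γ < δ i then (1:ℝ) else 0)
        = ∑ i, (if P ((τ i : ℕ) + 1) then (1:ℝ) else 0) := by
      apply Finset.sum_congr rfl
      intro i _
      have hiff : (γ < δ i) ↔ P ((τ i : ℕ) + 1) := by
        rw [hδ i, hPdef]
        push_cast
        exact Iff.rfl
      simp only [hiff]
    have e2 : ∑ i, (if ω ∈ A i then (1:ℝ) else 0)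
        = ∑ i, (if P (rankOf (fun j => θ j ω) i) then (1:ℝ) else 0) := by
      apply Finset.sum_congr rfl
      intro i _
      have hiff : (ω ∈ A i) ↔ P (rankOf (fun j => θ j ω) i) := Iff.rfl
      simp only [hiff]
    rw [e1, e2]
    have hf1 : Function.Injective fun i : Fin n => (τ i : ℕ) + 1 := by
      intro a b hab
      exact τ.injective (Fin.val_injective (Nat.succ_injective hab))
    have hm1 : ∀ i : Fin n, (τ i : ℕ) + 1 ∈ Finset.Icc 1 n := by
      intro i
      rw [Finset.mem_Icc]
      exact ⟨Nat.le_add_left 1 _, Nat.succ_le_of_lt (τ i).isLt⟩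
    rw [sum_ite_inj P _ hf1 hm1, sum_ite_inj P _ (rank_inj hω) (rank_mem_Icc _)]
  -- integrate the counting identity
  have hsum_eq : ∑ i, (if γ < δ i then (1:ℝ) else 0) = ∑ i, (μ (A i)).toReal := by
    have h1 : ∫ _, (∑ i, (if γ < δ i then (1:ℝ) else 0) : ℝ) ∂μ
        = ∑ i, (if γ < δ i then (1:ℝ) else 0) := by simp
    have h2 : ∫ ω, ∑ i, (if ω ∈ A i then (1:ℝ) else 0) ∂μ = ∑ i, (μ (A i)).toReal := by
      rw [integral_finset_sum Finset.univ (f := fun (i : Fin n) (ω : Ω) => if ω ∈ A i then (1:ℝ) else 0)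
        (fun i _ => integrable_ite_mem μ (p := fun ω => ω ∈ A i) (hA i))]
      exact Finset.sum_congr rfl fun i _ => integral_ite_mem_s14 μ (p := fun ω => ω ∈ A i) (hA i)
    rw [← h1, integral_congr_ae hcount, h2]
  -- per-index integrals
  have hint1 : ∀ i, ∫ ω, (if percOf (fun j => θ j ω) i ≤ γ ∧ γ < δ i then (1:ℝ) else 0) ∂μ
      = (if γ < δ i then (1:ℝ) else 0) * (1 - (μ (A i)).toReal) := by
    intro i
    by_cases hd : γ < δ i
    · simp only [hd, and_true, if_true, one_mul]
      have hset : {ω | percOf (fun j => θ j ω) i ≤ γ} = (A i)ᶜ := by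
        ext ω; simp [hAdef, not_lt]
      have hms : MeasurableSet {ω | percOf (fun j => θ j ω) i ≤ γ} := by
        rw [hset]; exact (hA i).compl
      rw [integral_ite_mem_s14 μ hms, hset, prob_compl_eq_one_sub (hA i),
        ENNReal.toReal_sub_of_le prob_le_one ENNReal.one_ne_top, ENNReal.toReal_one]
    · simp [hd]
  have hint2 : ∀ i, ∫ ω, (if γ < percOf (fun j => θ j ω) i ∧ δ i ≤ γ then (1:ℝ) else 0) ∂μ
      = (if δ i ≤ γ then (1:ℝ) else 0) * (μ (A i)).toReal := by
    intro i
    by_cases hd : δ i ≤ γ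
    · simp only [hd, and_true, if_true, one_mul]
      exact integral_ite_mem_s14 μ (hA i)
    · simp [hd]
  -- integrability of summands
  have hintg : ∀ i : Fin n, Integrable (fun ω =>
      (if percOf (fun j => θ j ω) i ≤ γ ∧ γ < δ i then (1:ℝ) else 0)
      + (if γ < percOf (fun j => θ j ω) i ∧ δ i ≤ γ then (1:ℝ) else 0)) μ := by
    intro i
    have hm1 : MeasurableSet {ω | percOf (fun j => θ j ω) i ≤ γ ∧ γ < δ i} := by
      rw [Set.setOf_and]
      exact (measurableSet_le (hperc_meas i) measurable_const).inter (MeasurableSet.const _)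
    have hm2 : MeasurableSet {ω | γ < percOf (fun j => θ j ω) i ∧ δ i ≤ γ} := by
      rw [Set.setOf_and]
      exact (measurableSet_lt measurable_const (hperc_meas i)).inter (MeasurableSet.const _)
    exact (integrable_ite_mem μ hm1).add (integrable_ite_mem μ hm2)
  -- main integral computation
  have hRCL : ∫ ω, RCL n γ (fun j => θ j ω) δ ∂μ
      = (1/(n:ℝ)) * ∑ i, ((if γ < δ i then (1:ℝ) else 0) * (1 - (μ (A i)).toReal)
          + (if δ i ≤ γ then (1:ℝ) else 0) * (μ (A i)).toReal) := by
    unfold RCL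
    rw [integral_const_mul]
    congr 1
    rw [integral_finset_sum _ (fun i _ => hintg i)]
    apply Finset.sum_congr rfl
    intro i _
    rw [integral_add (by
        have hm1 : MeasurableSet {ω | percOf (fun j => θ j ω) i ≤ γ ∧ γ < δ i} := by
          rw [Set.setOf_and]
          exact (measurableSet_le (hperc_meas i) measurable_const).inter (MeasurableSet.const _)
        exact integrable_ite_mem μ hm1)
      (by
        have hm2 : MeasurableSet {ω | γ < percOf (fun j => θ j ω) i ∧ δ i ≤ γ} := by
          rw [Set.setOf_and]
          exact (measurableSet_lt measurable_const (hperc_meas i)).inter (MeasurableSet.const _)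
        exact integrable_ite_mem μ hm2)]
    rw [hint1 i, hint2 i]
  -- algebra
  have expand : ∑ i, ((if γ < δ i then (1:ℝ) else 0) * (1 - (μ (A i)).toReal)
          + (if δ i ≤ γ then (1:ℝ) else 0) * (μ (A i)).toReal)
      = 2 * (∑ i, (μ (A i)).toReal)
        - 2 * (∑ i, (if γ < δ i then (1:ℝ) else 0) * (μ (A i)).toReal) := by
    have step : ∀ i : Fin n, (if γ < δ i then (1:ℝ) else 0) * (1 - (μ (A i)).toReal)
          + (if δ i ≤ γ then (1:ℝ) else 0) * (μ (A i)).toReal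
        = ((if γ < δ i then (1:ℝ) else 0) + (μ (A i)).toReal)
          - 2 * ((if γ < δ i then (1:ℝ) else 0) * (μ (A i)).toReal) := by
      intro i
      by_cases h : γ < δ i
      · simp only [h, if_true, not_le.mpr h, if_false]
        ring
      · simp only [h, if_false, not_lt.mp h, if_true]
        ring
    rw [Finset.sum_congr rfl (fun i _ => step i), Finset.sum_sub_distrib,
      Finset.sum_add_distrib, ← Finset.mul_sum, hsum_eq]
    ring
  have hS : (∑ i, (μ (A i)).toReal) ≠ 0 := ne_of_gt hpos
  rw [hRCL, expand, hTPR]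
  rw [mul_assoc, sub_mul, one_mul, div_mul_cancel₀ _ hS]
  ring
end
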